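/- arXiv:2103.05995 — 3 statements merged into one kernel-verified Lean document; each statement's English description precedes it below -/
import Mathlib

section
/- Let G0 be a connected finite simple graph containing distinct vertices u1, u2, u3, u4 with d_{G0}(u1) = 1, d_{G0}(u2) = 2, d_{G0}(u3) ∈ {3, 4}, d_{G0}(u4) = 1, such that u1u2 and u3u4 are edges of G0. Let P = v1v2⋯vl (l ≥ 1) be a path vertex-disjoint from G0, let G1 be the graph obtained from the disjoint union of G0 and P by adding the edge u1v1, and let G2 be obtained from G1 by deleting the edge u1v1 and adding the edge u4v1. Then SO(G1) > SO(G2). -/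
open SimpleGraph

/-- Degree of a vertex (instance-free version). -/
noncomputable def gdeg {V : Type*} [Fintype V] (G : SimpleGraph V) (v : V) : ℕ :=
  (Set.toFinite (G.neighborSet v)).toFinset.card

/-- Sombor index: sum over edges of sqrt(d(u)^2 + d(v)^2). -/
noncomputable def SO {V : Type*} [Fintype V] (G : SimpleGraph V) : ℝ :=
  ∑ e ∈ (Set.toFinite G.edgeSet).toFinset,
    Sym2.lift ⟨fun u v => Real.sqrt ((gdeg G u : ℝ) ^ 2 + (gdeg G v : ℝ) ^ 2),
      fun u v => by dsimp only; rw [add_comm]⟩ e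

/-- Reduced Sombor index: sum over edges of sqrt((d(u)-1)^2 + (d(v)-1)^2). -/
noncomputable def SOred {V : Type*} [Fintype V] (G : SimpleGraph V) : ℝ :=
  ∑ e ∈ (Set.toFinite G.edgeSet).toFinset,
    Sym2.lift ⟨fun u v => Real.sqrt (((gdeg G u : ℝ) - 1) ^ 2 + ((gdeg G v : ℝ) - 1) ^ 2),
      fun u v => by dsimp only; rw [add_comm]⟩ e

lemma gdeg_ncard {V : Type*} [Fintype V] (G : SimpleGraph V) (v : V) :
    gdeg G v = (G.neighborSet v).ncard := by
  rw [gdeg, Set.ncard_eq_toFinset_card _ (Set.toFinite _)]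

lemma ns_sup_left {V : Type*} (B : SimpleGraph V) (x y : V) (hxy : x ≠ y) :
    (B ⊔ fromEdgeSet {s(x,y)}).neighborSet x = insert y (B.neighborSet x) := by
  ext w
  simp only [mem_neighborSet, sup_adj, fromEdgeSet_adj, Set.mem_singleton_iff, Sym2.eq_iff,
    Set.mem_insert_iff]
  aesop

lemma ns_sup_other {V : Type*} (B : SimpleGraph V) (x y v : V) (hvx : v ≠ x) (hvy : v ≠ y) :
    (B ⊔ fromEdgeSet {s(x,y)}).neighborSet v = B.neighborSet v := by
  ext w
  simp only [mem_neighborSet, sup_adj, fromEdgeSet_adj, Set.mem_singleton_iff, Sym2.eq_iff]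
  aesop

lemma gdeg_sup_left {V : Type*} [Fintype V] (B : SimpleGraph V) (x y : V) (hxy : x ≠ y)
    (h : ¬ B.Adj x y) : gdeg (B ⊔ fromEdgeSet {s(x,y)}) x = gdeg B x + 1 := by
  rw [gdeg_ncard, gdeg_ncard, ns_sup_left B x y hxy,
    Set.ncard_insert_of_notMem (by simpa using h) (Set.toFinite _)]

lemma gdeg_sup_right {V : Type*} [Fintype V] (B : SimpleGraph V) (x y : V) (hxy : x ≠ y)
    (h : ¬ B.Adj x y) : gdeg (B ⊔ fromEdgeSet {s(x,y)}) y = gdeg B y + 1 := by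
  rw [show s(x,y) = s(y,x) from Sym2.eq_swap]
  exact gdeg_sup_left B y x hxy.symm (fun h' => h h'.symm)

lemma gdeg_sup_other {V : Type*} [Fintype V] (B : SimpleGraph V) (x y v : V)
    (hvx : v ≠ x) (hvy : v ≠ y) : gdeg (B ⊔ fromEdgeSet {s(x,y)}) v = gdeg B v := by
  rw [gdeg_ncard, gdeg_ncard, ns_sup_other B x y v hvx hvy]

lemma gdeg_sum_inl {α β : Type*} [Fintype α] [Fintype β] (G : SimpleGraph α) (H : SimpleGraph β)
    (v : α) : gdeg (G ⊕g H) (Sum.inl v) = gdeg G v := by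
  rw [gdeg_ncard, gdeg_ncard]
  have : (G ⊕g H).neighborSet (Sum.inl v) = Sum.inl '' (G.neighborSet v) := by
    ext w; cases w <;> simp [mem_neighborSet]
  rw [this, Set.ncard_image_of_injective _ Sum.inl_injective]

lemma delete_added {V : Type*} (B : SimpleGraph V) (e : Sym2 V) (he : e ∉ B.edgeSet) :
    (B ⊔ fromEdgeSet {e}).deleteEdges {e} = B := by
  ext x y
  simp only [deleteEdges_adj, sup_adj, fromEdgeSet_adj, Set.mem_singleton_iff]
  constructor
  · rintro ⟨h | ⟨rfl, hne⟩, hne2⟩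
    · exact h
    · exact absurd rfl hne2
  · intro h
    exact ⟨Or.inl h, fun heq => he (heq ▸ ((mem_edgeSet B).2 h))⟩

lemma toFinset_edge_insert {V : Type*} [Fintype V] [DecidableEq V] (B : SimpleGraph V) (x y : V) (hxy : x ≠ y) :
    (Set.toFinite (B ⊔ fromEdgeSet {s(x,y)}).edgeSet).toFinset
      = insert s(x,y) (Set.toFinite B.edgeSet).toFinset := by
  ext e
  simp only [Set.Finite.mem_toFinset, edgeSet_sup, edgeSet_fromEdgeSet, Set.mem_union,
    Set.mem_diff, Set.mem_singleton_iff, Finset.mem_insert, Set.mem_setOf_eq]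
  constructor
  · rintro (h | ⟨rfl, _⟩)
    · exact Or.inr h
    · exact Or.inl rfl
  · rintro (rfl | h)
    · exact Or.inr ⟨rfl, by simp [Sym2.mk_isDiag_iff, hxy]⟩
    · exact Or.inl h

/-- Lemma 2.1 for `SO`: moving the pendant path from the vertex u₁ of degree 1
(adjacent to a vertex of degree 2) to the vertex u₄ of degree 1 (adjacent to a vertex of
degree 3 or 4) strictly decreases the index. -/
theorem lemma21_SO {α : Type*} [Fintype α] (G₀ : SimpleGraph α)
    (hconn : G₀.Connected) (u₁ u₂ u₃ u₄ : α)
    (hdist : List.Pairwise (· ≠ ·) [u₁, u₂, u₃, u₄])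
    (hd₁ : gdeg G₀ u₁ = 1) (hd₂ : gdeg G₀ u₂ = 2)
    (hd₃ : gdeg G₀ u₃ = 3 ∨ gdeg G₀ u₃ = 4) (hd₄ : gdeg G₀ u₄ = 1)
    (he₁₂ : G₀.Adj u₁ u₂) (he₃₄ : G₀.Adj u₃ u₄)
    (l : ℕ) (hl : 1 ≤ l)
    (G₁ G₂ : SimpleGraph (α ⊕ Fin l))
    (hG₁ : G₁ = (G₀ ⊕g pathGraph l) ⊔
      fromEdgeSet {s(Sum.inl u₁, Sum.inr ⟨0, by omega⟩)})
    (hG₂ : G₂ = (G₁.deleteEdges {s(Sum.inl u₁, Sum.inr ⟨0, by omega⟩)}) ⊔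
      fromEdgeSet {s(Sum.inl u₄, Sum.inr ⟨0, by omega⟩)}) :
    SO G₂ < SO G₁ := by
  classical
  simp only [List.pairwise_cons, List.mem_cons, List.not_mem_nil, or_false,
    List.mem_singleton] at hdist
  obtain ⟨h1, h2, h3, -⟩ := hdist
  have h12 : u₁ ≠ u₂ := h1 u₂ (Or.inl rfl)
  have h13 : u₁ ≠ u₃ := h1 u₃ (Or.inr (Or.inl rfl))
  have h14 : u₁ ≠ u₄ := h1 u₄ (Or.inr (Or.inr rfl))
  have h23 : u₂ ≠ u₃ := h2 u₃ (Or.inl rfl)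
  have h24 : u₂ ≠ u₄ := h2 u₄ (Or.inr rfl)
  have h34 : u₃ ≠ u₄ := h3 u₄ rfl
  set v₀ : Fin l := ⟨0, by omega⟩ with hv₀
  set B : SimpleGraph (α ⊕ Fin l) := G₀ ⊕g pathGraph l with hB
  have hBcross : ∀ (v : α) (i : Fin l), ¬ B.Adj (Sum.inl v) (Sum.inr i) := by
    intro v i h
    rw [hB] at h
    cases h
  have hne₁ : (Sum.inl u₁ : α ⊕ Fin l) ≠ Sum.inr v₀ := by simp
  have hne₄ : (Sum.inl u₄ : α ⊕ Fin l) ≠ Sum.inr v₀ := by simp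
  have hG₂' : G₂ = B ⊔ fromEdgeSet {s(Sum.inl u₄, Sum.inr v₀)} := by
    rw [hG₂, hG₁, delete_added _ _ (by rw [mem_edgeSet]; exact hBcross u₁ v₀)]
  -- degrees
  have hgB : ∀ v : α, gdeg B (Sum.inl v) = gdeg G₀ v := fun v => gdeg_sum_inl _ _ v
  have hd₁' : gdeg G₁ (Sum.inl u₁) = 2 := by
    rw [hG₁, gdeg_sup_left _ _ _ hne₁ (hBcross u₁ v₀), hgB, hd₁]
  have hd₂' : gdeg G₁ (Sum.inl u₂) = 2 := by
    rw [hG₁, gdeg_sup_other _ _ _ _ (by simp [h12.symm]) (by simp), hgB, hd₂]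
  have hd₃' : gdeg G₁ (Sum.inl u₃) = gdeg G₀ u₃ := by
    rw [hG₁, gdeg_sup_other _ _ _ _ (by simp [h13.symm]) (by simp), hgB]
  have hd₄' : gdeg G₁ (Sum.inl u₄) = 1 := by
    rw [hG₁, gdeg_sup_other _ _ _ _ (by simp [h14.symm]) (by simp), hgB, hd₄]
  have hd₁'' : gdeg G₂ (Sum.inl u₁) = 1 := by
    rw [hG₂', gdeg_sup_other _ _ _ _ (by simp [h14]) (by simp), hgB, hd₁]
  have hd₂'' : gdeg G₂ (Sum.inl u₂) = 2 := by
    rw [hG₂', gdeg_sup_other _ _ _ _ (by simp [h24]) (by simp), hgB, hd₂]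
  have hd₃'' : gdeg G₂ (Sum.inl u₃) = gdeg G₀ u₃ := by
    rw [hG₂', gdeg_sup_other _ _ _ _ (by simp [h34]) (by simp), hgB]
  have hd₄'' : gdeg G₂ (Sum.inl u₄) = 2 := by
    rw [hG₂', gdeg_sup_left _ _ _ hne₄ (hBcross u₄ v₀), hgB, hd₄]
  have hsame : ∀ v : α ⊕ Fin l, v ≠ Sum.inl u₁ → v ≠ Sum.inl u₄ → gdeg G₁ v = gdeg G₂ v := by
    intro v hv1 hv4
    rcases v with v | i
    · rw [hG₁, hG₂', gdeg_sup_other _ _ _ _ hv1 (by simp),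
        gdeg_sup_other _ _ _ _ hv4 (by simp)]
    · by_cases hi : i = v₀
      · subst hi
        rw [hG₁, hG₂', gdeg_sup_right _ _ _ hne₁ (hBcross u₁ v₀),
          gdeg_sup_right _ _ _ hne₄ (hBcross u₄ v₀)]
      · rw [hG₁, hG₂', gdeg_sup_other _ _ _ _ (by simp) (by simp [hi]),
          gdeg_sup_other _ _ _ _ (by simp) (by simp [hi])]
  -- neighborhoods of u₁, u₄ in B
  have hNsingle : ∀ u w : α, gdeg G₀ u = 1 → G₀.Adj u w →
      ∀ y, B.Adj (Sum.inl u) y → y = Sum.inl w := by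
    intro u w hdu hadj y hy
    rcases y with y | i
    · have hmem : y ∈ G₀.neighborSet u := hy
      have hcard : (G₀.neighborSet u).ncard = 1 := by rw [← gdeg_ncard, hdu]
      obtain ⟨a, ha⟩ := Set.ncard_eq_one.1 hcard
      have hw : w ∈ G₀.neighborSet u := hadj
      rw [ha] at hmem hw
      simp only [Set.mem_singleton_iff] at hmem hw
      rw [hmem, hw]
    · exact absurd hy (hBcross u i)
  have hN₁ := hNsingle u₁ u₂ hd₁ he₁₂
  have hN₄ := hNsingle u₄ u₃ hd₄ he₃₄.symm
  -- edge bookkeeping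
  set S : Finset (Sym2 (α ⊕ Fin l)) := (Set.toFinite B.edgeSet).toFinset with hS
  set ea : Sym2 (α ⊕ Fin l) := s(Sum.inl u₁, Sum.inl u₂) with hea
  set eb : Sym2 (α ⊕ Fin l) := s(Sum.inl u₃, Sum.inl u₄) with heb
  have heaS : ea ∈ S := by
    rw [hS, Set.Finite.mem_toFinset, mem_edgeSet]; exact he₁₂
  have hebS : eb ∈ S := by
    rw [hS, Set.Finite.mem_toFinset, mem_edgeSet]; exact he₃₄
  have heab : ea ≠ eb := by
    rw [hea, heb]
    intro h
    rw [Sym2.eq_iff] at h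
    rcases h with ⟨ha, _⟩ | ⟨ha, _⟩
    · exact h13 (Sum.inl.inj ha)
    · exact h14 (Sum.inl.inj ha)
  have hPsub : {ea, eb} ⊆ S := by
    intro e he
    rcases Finset.mem_insert.1 he with rfl | he
    · exact heaS
    · rwa [Finset.mem_singleton.1 he]
  have hE₁ : (Set.toFinite G₁.edgeSet).toFinset = insert s(Sum.inl u₁, Sum.inr v₀) S := by
    rw [hS]; rw [hG₁]; exact toFinset_edge_insert B _ _ hne₁
  have hE₂ : (Set.toFinite G₂.edgeSet).toFinset = insert s(Sum.inl u₄, Sum.inr v₀) S := by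
    rw [hS]; rw [hG₂']; exact toFinset_edge_insert B _ _ hne₄
  have hm₁ : s(Sum.inl u₁, Sum.inr v₀) ∉ S := by
    rw [hS, Set.Finite.mem_toFinset, mem_edgeSet]; exact hBcross u₁ v₀
  have hm₂ : s(Sum.inl u₄, Sum.inr v₀) ∉ S := by
    rw [hS, Set.Finite.mem_toFinset, mem_edgeSet]; exact hBcross u₄ v₀
  rw [SO, SO, hE₁, hE₂, Finset.sum_insert hm₁, Finset.sum_insert hm₂,
    ← Finset.sum_sdiff hPsub, ← Finset.sum_sdiff hPsub]
  have hcong : ∀ e ∈ S \ {ea, eb},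
      Sym2.lift ⟨fun u v => Real.sqrt ((gdeg G₂ u : ℝ) ^ 2 + (gdeg G₂ v : ℝ) ^ 2),
        fun u v => by dsimp only; rw [add_comm]⟩ e =
      Sym2.lift ⟨fun u v => Real.sqrt ((gdeg G₁ u : ℝ) ^ 2 + (gdeg G₁ v : ℝ) ^ 2),
        fun u v => by dsimp only; rw [add_comm]⟩ e := by
    intro e
    induction e using Sym2.ind with
    | _ x y =>
      intro he
      rw [Finset.mem_sdiff] at he
      obtain ⟨heS, heP⟩ := he
      simp only [Finset.mem_insert, Finset.mem_singleton, not_or] at heP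
      obtain ⟨hnea, hneb⟩ := heP
      rw [hS, Set.Finite.mem_toFinset, mem_edgeSet] at heS
      have hx : gdeg G₁ x = gdeg G₂ x := by
        apply hsame
        · rintro rfl
          exact hnea (by rw [hea, hN₁ y heS])
        · rintro rfl
          exact hneb (by rw [heb, hN₄ y heS, Sym2.eq_swap])
      have hy : gdeg G₁ y = gdeg G₂ y := by
        apply hsame
        · rintro rfl
          exact hnea (by rw [hea, hN₁ x heS.symm, Sym2.eq_swap])
        · rintro rfl
          exact hneb (by rw [heb, hN₄ x heS.symm])
      simp only [Sym2.lift_mk]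
      rw [hx, hy]
  rw [Finset.sum_congr rfl hcong]
  simp only [Finset.sum_pair heab, Finset.sum_pair (show s(Sum.inl u₁, Sum.inl u₂) ≠ s(Sum.inl u₃, Sum.inl u₄) from heab), hea, heb, Sym2.lift_mk]
  have hsame₀ : gdeg G₁ (Sum.inr v₀) = gdeg G₂ (Sum.inr v₀) := by
    rw [hG₁, hG₂', gdeg_sup_right _ _ _ hne₁ (hBcross u₁ v₀),
      gdeg_sup_right _ _ _ hne₄ (hBcross u₄ v₀)]
  rw [hd₁', hd₂', hd₃', hd₄', hd₁'', hd₂'', hd₃'', hd₄'', ← hsame₀]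
  have key : Real.sqrt ((1:ℝ)^2 + 2^2) + Real.sqrt ((gdeg G₀ u₃ : ℝ)^2 + 2^2)
      < Real.sqrt ((2:ℝ)^2 + 2^2) + Real.sqrt ((gdeg G₀ u₃ : ℝ)^2 + 1^2) := by
    rcases hd₃ with h | h <;> rw [h] <;> push_cast <;> norm_num
    · have h8 : (2.8284 : ℝ) < Real.sqrt 8 := by rw [Real.lt_sqrt (by norm_num)]; norm_num
      have h5 : Real.sqrt (5:ℝ) < 2.2361 := by rw [Real.sqrt_lt' (by norm_num)]; norm_num
      have h10 : (3.1622 : ℝ) < Real.sqrt 10 := by rw [Real.lt_sqrt (by norm_num)]; norm_num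
      have h13 : Real.sqrt (13:ℝ) < 3.6056 := by rw [Real.sqrt_lt' (by norm_num)]; norm_num
      linarith
    · have h8 : (2.8284 : ℝ) < Real.sqrt 8 := by rw [Real.lt_sqrt (by norm_num)]; norm_num
      have h5 : Real.sqrt (5:ℝ) < 2.2361 := by rw [Real.sqrt_lt' (by norm_num)]; norm_num
      have h17 : (4.1231 : ℝ) < Real.sqrt 17 := by rw [Real.lt_sqrt (by norm_num)]; norm_num
      have h20 : Real.sqrt (20:ℝ) < 4.4722 := by rw [Real.sqrt_lt' (by norm_num)]; norm_num
      linarith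
  push_cast at key ⊢
  norm_num at key ⊢
  linarith
end

section
/- Let n ≥ 13. Let T1 ∈ A1, T2 ∈ A4, T3 ∈ A3, T4 ∈ A2, T5 ∈ A13, T6 ∈ A12, T7 ∈ A11, T8 ∈ A10, T9 ∈ A9, T10 ∈ A8, T11 ∈ A7, T12 ∈ A6, T13 ∈ A5 and T14 ∈ Ω(n) be chemical trees on n vertices. Then SO_red(T1) < SO_red(T2) < SO_red(T3) < SO_red(T4) < SO_red(T5) < SO_red(T6) < SO_red(T7) < SO_red(T8) < SO_red(T9) < SO_red(T10) < SO_red(T11) < SO_red(T12) < SO_red(T13) < SO_red(T14), and every chemical tree T on n vertices belonging to none of the classes A1, …, A13, Ω(n) satisfies SO_red(T14) < SO_red(T). -/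
open SimpleGraph

/-- Number of edges of a finite graph. -/
noncomputable def numEdges {V : Type*} [Fintype V] (G : SimpleGraph V) : ℕ :=
  (Set.toFinite G.edgeSet).toFinset.card

/-- Number of vertices of degree `i`. -/
noncomputable def nDeg {V : Type*} [Fintype V] (G : SimpleGraph V) (i : ℕ) : ℕ :=
  (Finset.univ.filter fun v => gdeg G v = i).card

open scoped Classical in
/-- `mij G i j` is the number of edges joining a vertex of degree `i` with a vertex of degree `j`. -/
noncomputable def mij {V : Type*} [Fintype V] (G : SimpleGraph V) (i j : ℕ) : ℕ :=
  ((Set.toFinite G.edgeSet).toFinset.filter fun e =>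
    Sym2.lift ⟨fun u v => ((gdeg G u = i ∧ gdeg G v = j) ∨ (gdeg G u = j ∧ gdeg G v = i)),
      fun u v => propext (by tauto)⟩ e).card

/-- A chemical tree: a tree in which every vertex has degree at most 4. -/
def IsChemicalTree {V : Type*} [Fintype V] (G : SimpleGraph V) : Prop :=
  G.IsTree ∧ ∀ v, gdeg G v ≤ 4

/-- Membership in the family Ω(n) of chemical trees (with n = number of vertices):
three vertices of degree 3, five of degree 1, n-8 of degree 2, and
m_{1,2} = m_{2,3} = 5, m_{1,3} = 0, m_{3,3} = 2, m_{2,2} = n - 13. -/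
def InOmega {V : Type*} [Fintype V] (G : SimpleGraph V) : Prop :=
  IsChemicalTree G ∧ nDeg G 3 = 3 ∧ nDeg G 1 = 5 ∧ nDeg G 4 = 0 ∧
    nDeg G 2 = Fintype.card V - 8 ∧
    mij G 1 2 = 5 ∧ mij G 2 3 = 5 ∧ mij G 1 3 = 0 ∧ mij G 3 3 = 2 ∧
    mij G 2 2 = Fintype.card V - 13

/-- Membership in the class of chemical trees with maximum degree at most 3,
at most two vertices of degree 3, and prescribed values of
(m_{3,3}, m_{2,3}, m_{1,2}, m_{1,3}, m_{2,2}). -/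
def InClassA {V : Type*} [Fintype V] (G : SimpleGraph V)
    (a b c d e : ℕ) : Prop :=
  G.IsTree ∧ (∀ v, gdeg G v ≤ 3) ∧ nDeg G 3 ≤ 2 ∧
    mij G 3 3 = a ∧ mij G 2 3 = b ∧ mij G 1 2 = c ∧ mij G 1 3 = d ∧ mij G 2 2 = e



open SimpleGraph Finset

open scoped Classical in
lemma tree_inside_edges {V : Type*} [Fintype V] {G : SimpleGraph V} (hG : G.IsTree)
    (S : Finset V) {r : V} (hr : r ∈ S) :
    ((Set.toFinite G.edgeSet).toFinset.filter (fun e => ∀ x ∈ e, x ∈ S)).card + 1 ≤ S.card := by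
  classical
  have hEU : ∀ v w : V, ∃! p : G.Walk v w, p.IsPath := hG.existsUnique_path
  set par : V → V := fun v => ((hEU v r).choose.getVert 1) with hpar
  have hparr : par r = r := by
    have h2 : (hEU r r).choose = (Walk.nil : G.Walk r r) :=
      ((hEU r r).choose_spec.2 Walk.nil Walk.IsPath.nil).symm
    show (hEU r r).choose.getVert 1 = r
    rw [h2]
    rfl
  have hdich : ∀ u v, G.Adj u v → par u = v ∨ par v = u := by
    intro u v huv
    by_cases hvu : par v = u
    · exact Or.inr hvu
    left
    have hpvpath : (hEU v r).choose.IsPath := (hEU v r).choose_spec.1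
    by_cases hu : u ∈ (hEU v r).choose.support
    · exfalso
      have ht : ((hEU v r).choose.takeUntil u hu).IsPath := hpvpath.takeUntil hu
      have hs : (Walk.cons huv.symm Walk.nil : G.Walk v u).IsPath := by
        simp [Walk.cons_isPath_iff, huv.ne']
      have heq : (hEU v r).choose.takeUntil u hu = Walk.cons huv.symm Walk.nil :=
        (hEU v u).unique ht hs
      have hspec := (hEU v r).choose.take_spec hu
      rw [heq] at hspec
      apply hvu
      have : (hEU v r).choose.getVert 1 = u := by
        rw [← hspec]
        simp [Walk.cons_append, Walk.nil_append, Walk.getVert_cons_succ, Walk.getVert_zero]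
      simpa [hpar] using this
    · have hp : (Walk.cons huv (hEU v r).choose).IsPath := hpvpath.cons hu
      have : (hEU u r).choose = Walk.cons huv (hEU v r).choose :=
        (hEU u r).unique (hEU u r).choose_spec.1 hp
      simp [hpar, this, Walk.getVert_cons_succ, Walk.getVert_zero]
  -- the "child" map
  set f : Sym2 V → V := fun e => if h : ∃ u, u ∈ e ∧ par u ∈ e ∧ par u ≠ u then h.choose else r
    with hf
  have hfspec : ∀ e, e ∈ (Set.toFinite G.edgeSet).toFinset → (∀ x ∈ e, x ∈ S) →
      f e ∈ e ∧ par (f e) ∈ e ∧ par (f e) ≠ f e := by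
    intro e
    induction e using Sym2.ind with
    | _ u v =>
      intro he hins
      rw [Set.Finite.mem_toFinset] at he
      have huv : G.Adj u v := he
      have hex : ∃ x, x ∈ s(u,v) ∧ par x ∈ s(u,v) ∧ par x ≠ x := by
        rcases hdich u v huv with h | h
        · exact ⟨u, by simp [h, huv.ne']⟩
        · exact ⟨v, by simp [h, huv.ne]⟩
      have : f s(u,v) = hex.choose := by rw [hf]; exact dif_pos hex
      rw [this]
      exact hex.choose_spec
  have hmaps : ∀ e ∈ (Set.toFinite G.edgeSet).toFinset.filter (fun e => ∀ x ∈ e, x ∈ S),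
      f e ∈ S.erase r := by
    intro e he
    rw [mem_filter] at he
    obtain ⟨hfe, hpe, hne⟩ := hfspec e he.1 he.2
    rw [mem_erase]
    refine ⟨?_, he.2 _ hfe⟩
    intro hfr
    rw [hfr] at hne
    exact hne hparr
  have hinj : Set.InjOn f ((Set.toFinite G.edgeSet).toFinset.filter (fun e => ∀ x ∈ e, x ∈ S)) := by
    intro e1 he1 e2 he2 heq
    simp only [Finset.coe_filter, Set.mem_setOf_eq] at he1 he2
    obtain ⟨h1a, h1b, h1c⟩ := hfspec e1 he1.1 he1.2
    obtain ⟨h2a, h2b, h2c⟩ := hfspec e2 he2.1 he2.2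
    have e1eq : e1 = s(f e1, par (f e1)) := ((Sym2.mem_and_mem_iff h1c.symm).mp ⟨h1a, h1b⟩)
    have e2eq : e2 = s(f e2, par (f e2)) := ((Sym2.mem_and_mem_iff h2c.symm).mp ⟨h2a, h2b⟩)
    rw [e1eq, e2eq, heq]
  have hcard := Finset.card_le_card_of_injOn f hmaps hinj
  have : (S.erase r).card = S.card - 1 := Finset.card_erase_of_mem hr
  have hS1 : 1 ≤ S.card := Finset.card_pos.mpr ⟨r, hr⟩
  omega

/-- the ten possible degree pairs -/
def Pset : Finset (Sym2 ℕ) :=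
  {s(1,1), s(1,2), s(1,3), s(1,4), s(2,2), s(2,3), s(2,4), s(3,3), s(3,4), s(4,4)}

lemma pair_mem_Pset {a b : ℕ} (h1a : 1 ≤ a) (h4a : a ≤ 4) (h1b : 1 ≤ b) (h4b : b ≤ 4) :
    s(a, b) ∈ Pset := by
  interval_cases a <;> interval_cases b <;> decide

def cnt (i : ℕ) : Sym2 ℕ → ℕ :=
  Sym2.lift ⟨fun a b => (if a = i then 1 else 0) + (if b = i then 1 else 0),
    fun a b => by dsimp only; omega⟩

lemma walk_boundary {V : Type*} {G : SimpleGraph V} (P : V → Prop) :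
    ∀ {v w : V}, G.Walk v w → P v → ¬ P w → ∃ a b, G.Adj a b ∧ P a ∧ ¬ P b := by
  intro v w p
  induction p with
  | nil => intro hv hw; exact absurd hv hw
  | @cons a x b h q ih =>
    intro hv hw
    by_cases hx : P x
    · exact ih hx hw
    · exact ⟨_, _, h, hv, hx⟩

section
open scoped Classical
variable {V : Type*} [Fintype V] (G : SimpleGraph V)

lemma gdeg_eq_degree (v : V) : gdeg G v = G.degree v := by
  rw [gdeg, degree, neighborFinset]
  congr 1
  ext w
  simp

lemma Efinset_eq : (Set.toFinite G.edgeSet).toFinset = G.edgeFinset := by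
  ext e; rw [Set.Finite.mem_toFinset, mem_edgeFinset]

lemma gdeg_card_filter (v : V) :
    gdeg G v = ((Set.toFinite G.edgeSet).toFinset.filter (fun e => v ∈ e)).card := by
  rw [gdeg_eq_degree, Efinset_eq, ← incidenceFinset_eq_filter, card_incidenceFinset_eq_degree]

lemma mij_eq_fiber (i j : ℕ) :
    mij G i j = ((Set.toFinite G.edgeSet).toFinset.filter
      (fun e => Sym2.map (gdeg G) e = s(i, j))).card := by
  rw [mij]
  congr 1
  apply filter_congr
  intro e _
  induction e using Sym2.ind with
  | _ u v =>
    simp only [Sym2.lift_mk, Sym2.map_pair_eq, Sym2.eq_iff, eq_iff_iff]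
    try tauto

variable {G}

lemma sum_fiber {M : Type*} [AddCommMonoid M] (f : Sym2 ℕ → M)
    (h1 : ∀ v, 1 ≤ gdeg G v) (h4 : ∀ v, gdeg G v ≤ 4) :
    ∑ e ∈ (Set.toFinite G.edgeSet).toFinset, f (Sym2.map (gdeg G) e) =
      ∑ p ∈ Pset, ((Set.toFinite G.edgeSet).toFinset.filter
        (fun e => Sym2.map (gdeg G) e = p)).card • f p := by
  rw [← Finset.sum_fiberwise_of_maps_to (g := Sym2.map (gdeg G)) ?_ (fun e => f (Sym2.map (gdeg G) e))]
  · apply Finset.sum_congr rfl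
    intro p _
    rw [← Finset.sum_const]
    apply Finset.sum_congr rfl
    intro e he
    rw [mem_filter] at he
    rw [he.2]
  · intro e _
    induction e using Sym2.ind with
    | _ u v => exact pair_mem_Pset (h1 u) (h4 u) (h1 v) (h4 v)

lemma sum_Pset {M : Type*} [AddCommMonoid M] (g : Sym2 ℕ → M) :
    ∑ p ∈ Pset, g p = g s(1,1) + g s(1,2) + g s(1,3) + g s(1,4) + g s(2,2) + g s(2,3)
      + g s(2,4) + g s(3,3) + g s(3,4) + g s(4,4) := by
  rw [Pset]
  rw [Finset.sum_insert (by decide), Finset.sum_insert (by decide),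
    Finset.sum_insert (by decide), Finset.sum_insert (by decide),
    Finset.sum_insert (by decide), Finset.sum_insert (by decide),
    Finset.sum_insert (by decide), Finset.sum_insert (by decide),
    Finset.sum_insert (by decide), Finset.sum_singleton]
  abel

/-- master decomposition -/
lemma sum_decomp {M : Type*} [AddCommMonoid M] (f : Sym2 ℕ → M)
    (h1 : ∀ v, 1 ≤ gdeg G v) (h4 : ∀ v, gdeg G v ≤ 4) :
    ∑ e ∈ (Set.toFinite G.edgeSet).toFinset, f (Sym2.map (gdeg G) e) =
      mij G 1 1 • f s(1,1) + mij G 1 2 • f s(1,2) + mij G 1 3 • f s(1,3) + mij G 1 4 • f s(1,4)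
      + mij G 2 2 • f s(2,2) + mij G 2 3 • f s(2,3) + mij G 2 4 • f s(2,4)
      + mij G 3 3 • f s(3,3) + mij G 3 4 • f s(3,4) + mij G 4 4 • f s(4,4) := by
  rw [sum_fiber f h1 h4, sum_Pset (fun p => ((Set.toFinite G.edgeSet).toFinset.filter
        (fun e => Sym2.map (gdeg G) e = p)).card • f p)]
  simp only [← mij_eq_fiber]

/-- edge count decomposition -/
lemma edge_count_decomp (h1 : ∀ v, 1 ≤ gdeg G v) (h4 : ∀ v, gdeg G v ≤ 4) :
    (Set.toFinite G.edgeSet).toFinset.card =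
      mij G 1 1 + mij G 1 2 + mij G 1 3 + mij G 1 4 + mij G 2 2 + mij G 2 3 + mij G 2 4
      + mij G 3 3 + mij G 3 4 + mij G 4 4 := by
  have := sum_decomp (fun _ => (1 : ℕ)) h1 h4
  simpa using this

/-- SOred decomposition -/
lemma SOred_decomp (h1 : ∀ v, 1 ≤ gdeg G v) (h4 : ∀ v, gdeg G v ≤ 4) :
    SOred G = mij G 1 2 + mij G 1 3 * 2 + mij G 1 4 * 3 + mij G 2 2 * Real.sqrt 2
      + mij G 2 3 * Real.sqrt 5 + mij G 2 4 * Real.sqrt 10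
      + mij G 3 3 * (2 * Real.sqrt 2) + mij G 3 4 * Real.sqrt 13
      + mij G 4 4 * (3 * Real.sqrt 2) := by
  have hW : ∀ e, (Sym2.lift ⟨fun u v => Real.sqrt (((gdeg G u : ℝ) - 1) ^ 2 + ((gdeg G v : ℝ) - 1) ^ 2),
      fun u v => by dsimp only; rw [add_comm]⟩ e) =
      (Sym2.lift ⟨fun (a b : ℕ) => Real.sqrt (((a : ℝ) - 1) ^ 2 + ((b : ℝ) - 1) ^ 2),
      fun a b => by dsimp only; rw [add_comm]⟩ (Sym2.map (gdeg G) e)) := by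
    intro e
    induction e using Sym2.ind with
    | _ u v => simp
  rw [SOred]
  simp only [hW]
  rw [sum_decomp _ h1 h4]
  simp only [Sym2.lift_mk, nsmul_eq_mul]
  have s11 : Real.sqrt (((1:ℕ):ℝ) - 1) ^ 2 = 0 := by norm_num
  norm_num
  have e4 : Real.sqrt 4 = 2 := by
    rw [show (4:ℝ) = 2^2 by norm_num, Real.sqrt_sq (by norm_num : (0:ℝ) ≤ 2)]
  have e9 : Real.sqrt 9 = 3 := by
    rw [show (9:ℝ) = 3^2 by norm_num, Real.sqrt_sq (by norm_num : (0:ℝ) ≤ 3)]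
  have e8 : Real.sqrt 8 = 2 * Real.sqrt 2 := by
    rw [show (8:ℝ) = 2^2 * 2 by norm_num, Real.sqrt_mul (by positivity) 2,
      Real.sqrt_sq (by norm_num : (0:ℝ) ≤ 2)]
  have e18 : Real.sqrt 18 = 3 * Real.sqrt 2 := by
    rw [show (18:ℝ) = 3^2 * 2 by norm_num, Real.sqrt_mul (by positivity) 2,
      Real.sqrt_sq (by norm_num : (0:ℝ) ≤ 3)]
  rw [e8, e18]

lemma claimA (i : ℕ) :
    ∑ e ∈ (Set.toFinite G.edgeSet).toFinset, cnt i (Sym2.map (gdeg G) e) = i * nDeg G i := by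
  have hcard : ∀ e ∈ (Set.toFinite G.edgeSet).toFinset, cnt i (Sym2.map (gdeg G) e) =
      ((Finset.univ.filter (fun x => gdeg G x = i)).filter (fun x => x ∈ e)).card := by
    intro e
    induction e using Sym2.ind with
    | _ u v =>
      intro he
      rw [Set.Finite.mem_toFinset] at he
      have huv : G.Adj u v := he
      have hne : u ≠ v := huv.ne
      have hset : (Finset.univ.filter (fun x => gdeg G x = i)).filter (fun x => x ∈ s(u,v)) =
          ({u, v} : Finset V).filter (fun x => gdeg G x = i) := by
        ext x
        simp only [mem_filter, mem_univ, true_and, Sym2.mem_iff, mem_insert, mem_singleton]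
        tauto
      rw [hset, cnt, Sym2.map_pair_eq, Sym2.lift_mk]
      rw [show ({u, v} : Finset V) = insert u {v} from rfl, filter_insert, filter_singleton]
      split_ifs <;> simp_all [Finset.card_insert_of_notMem]
  rw [Finset.sum_congr rfl hcard]
  have swap : ∑ e ∈ (Set.toFinite G.edgeSet).toFinset,
      ((Finset.univ.filter (fun x => gdeg G x = i)).filter (fun x => x ∈ e)).card =
      ∑ x ∈ Finset.univ.filter (fun x => gdeg G x = i),
        ((Set.toFinite G.edgeSet).toFinset.filter (fun e => x ∈ e)).card := by
    simp only [Finset.card_filter]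
    exact Finset.sum_comm
  rw [swap]
  have : ∀ x ∈ Finset.univ.filter (fun x => gdeg G x = i),
      ((Set.toFinite G.edgeSet).toFinset.filter (fun e => x ∈ e)).card = i := by
    intro x hx
    rw [mem_filter] at hx
    rw [← gdeg_card_filter, hx.2]
  rw [Finset.sum_congr rfl this, Finset.sum_const, smul_eq_mul, nDeg, mul_comm]

lemma deg_id_1 (h1 : ∀ v, 1 ≤ gdeg G v) (h4 : ∀ v, gdeg G v ≤ 4) :
    2 * mij G 1 1 + mij G 1 2 + mij G 1 3 + mij G 1 4 = 1 * nDeg G 1 := by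
  have h := claimA (G := G) 1
  rw [sum_decomp (cnt 1) h1 h4] at h
  simp only [show ∀ a b i : ℕ, cnt i s(a,b) = (if a = i then 1 else 0) + (if b = i then 1 else 0)
    from fun a b i => rfl, smul_eq_mul] at h
  norm_num at h
  omega

lemma deg_id_2 (h1 : ∀ v, 1 ≤ gdeg G v) (h4 : ∀ v, gdeg G v ≤ 4) :
    mij G 1 2 + 2 * mij G 2 2 + mij G 2 3 + mij G 2 4 = 2 * nDeg G 2 := by
  have h := claimA (G := G) 2
  rw [sum_decomp (cnt 2) h1 h4] at h
  simp only [show ∀ a b i : ℕ, cnt i s(a,b) = (if a = i then 1 else 0) + (if b = i then 1 else 0)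
    from fun a b i => rfl, smul_eq_mul] at h
  norm_num at h
  omega

lemma deg_id_3 (h1 : ∀ v, 1 ≤ gdeg G v) (h4 : ∀ v, gdeg G v ≤ 4) :
    mij G 1 3 + mij G 2 3 + 2 * mij G 3 3 + mij G 3 4 = 3 * nDeg G 3 := by
  have h := claimA (G := G) 3
  rw [sum_decomp (cnt 3) h1 h4] at h
  simp only [show ∀ a b i : ℕ, cnt i s(a,b) = (if a = i then 1 else 0) + (if b = i then 1 else 0)
    from fun a b i => rfl, smul_eq_mul] at h
  norm_num at h
  omega

lemma deg_id_4 (h1 : ∀ v, 1 ≤ gdeg G v) (h4 : ∀ v, gdeg G v ≤ 4) :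
    mij G 1 4 + mij G 2 4 + mij G 3 4 + 2 * mij G 4 4 = 4 * nDeg G 4 := by
  have h := claimA (G := G) 4
  rw [sum_decomp (cnt 4) h1 h4] at h
  simp only [show ∀ a b i : ℕ, cnt i s(a,b) = (if a = i then 1 else 0) + (if b = i then 1 else 0)
    from fun a b i => rfl, smul_eq_mul] at h
  norm_num at h
  omega

lemma nDeg_sum (h1 : ∀ v, 1 ≤ gdeg G v) (h4 : ∀ v, gdeg G v ≤ 4) :
    nDeg G 1 + nDeg G 2 + nDeg G 3 + nDeg G 4 = Fintype.card V := by
  have h := Finset.card_eq_sum_card_fiberwise (f := gdeg G) (s := Finset.univ)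
    (t := ({1, 2, 3, 4} : Finset ℕ))
    (fun v _ => by
      have := h1 v; have := h4 v
      simp only [Finset.mem_coe, mem_insert, mem_singleton]; omega)
  rw [Finset.card_univ] at h
  rw [h, Finset.sum_insert (by decide), Finset.sum_insert (by decide),
    Finset.sum_insert (by decide), Finset.sum_singleton]
  simp only [nDeg, Finset.filter_congr_decidable]
  omega

lemma one_le_gdeg (hc : G.Connected) (hcard : 2 ≤ Fintype.card V) (v : V) :
    1 ≤ gdeg G v := by
  obtain ⟨w, hw⟩ := Fintype.exists_ne_of_one_lt_card (by omega) v
  obtain ⟨p⟩ := hc v w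
  cases p with
  | nil => exact absurd rfl hw
  | @cons a x b h q =>
    rw [gdeg]
    exact Finset.card_pos.mpr ⟨x, by rw [Set.Finite.mem_toFinset]; exact h⟩

lemma gdeg_one_unique {u y z : V} (hu : gdeg G u = 1) (hy : G.Adj u y) (hz : G.Adj u z) :
    y = z := by
  rw [gdeg, Finset.card_eq_one] at hu
  obtain ⟨c, hc⟩ := hu
  have hy' : y ∈ (Set.toFinite (G.neighborSet u)).toFinset := by
    rw [Set.Finite.mem_toFinset]; exact hy
  have hz' : z ∈ (Set.toFinite (G.neighborSet u)).toFinset := by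
    rw [Set.Finite.mem_toFinset]; exact hz
  rw [hc, Finset.mem_singleton] at hy' hz'
  rw [hy', hz']

lemma mij11_eq_zero (hc : G.Connected) (hcard : 3 ≤ Fintype.card V) : mij G 1 1 = 0 := by
  rw [mij_eq_fiber, Finset.card_eq_zero, Finset.eq_empty_iff_forall_notMem]
  intro e
  induction e using Sym2.ind with
  | _ u v =>
    intro hmem
    rw [mem_filter, Set.Finite.mem_toFinset] at hmem
    obtain ⟨huv, hdeg⟩ := hmem
    have huv : G.Adj u v := huv
    rw [Sym2.map_pair_eq, Sym2.eq_iff] at hdeg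
    have hdu : gdeg G u = 1 := by tauto
    have hdv : gdeg G v = 1 := by tauto
    have hex : ∃ w : V, ¬ (w = u ∨ w = v) := by
      by_contra hno
      push_neg at hno
      have hsub : (Finset.univ : Finset V) ⊆ {u, v} := by
        intro x _
        rcases hno x with h | h <;> simp [h]
      have := Finset.card_le_card hsub
      rw [Finset.card_univ] at this
      have h2 : ({u, v} : Finset V).card ≤ 2 :=
        le_trans (Finset.card_insert_le _ _) (by simp)
      omega
    obtain ⟨w, hw⟩ := hex
    obtain ⟨p⟩ := hc.preconnected u w
    obtain ⟨a, b, hab, hPa, hPb⟩ := walk_boundary (fun x => x = u ∨ x = v) p (Or.inl rfl) hw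
    rcases hPa with rfl | rfl
    · exact hPb (Or.inr (gdeg_one_unique hdu hab huv))
    · exact hPb (Or.inl (gdeg_one_unique hdv hab huv.symm))

lemma mij_eq_zero_of_no_deg {j : ℕ} (i : ℕ) (h : ∀ v, gdeg G v ≠ j) : mij G i j = 0 := by
  rw [mij, Finset.card_eq_zero, Finset.eq_empty_iff_forall_notMem]
  intro e
  induction e using Sym2.ind with
  | _ u v =>
    intro hmem
    rw [mem_filter] at hmem
    have := hmem.2
    rw [Sym2.lift_mk] at this
    rcases this with ⟨_, h2⟩ | ⟨h2, _⟩
    · exact h v h2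
    · exact h u h2

lemma one_le_mij {i j : ℕ} {a b : V} (hab : G.Adj a b) (hi : gdeg G a = i)
    (hj : gdeg G b = j) : 1 ≤ mij G i j := by
  rw [mij]
  refine Finset.card_pos.mpr ⟨s(a, b), ?_⟩
  rw [mem_filter, Set.Finite.mem_toFinset]
  exact ⟨hab, by rw [Sym2.lift_mk]; exact Or.inl ⟨hi, hj⟩⟩
lemma mij_comm (i j : ℕ) : mij G i j = mij G j i := by
  rw [mij, mij]
  congr 1
  apply filter_congr
  intro e _
  induction e using Sym2.ind with
  | _ u v =>
    simp only [Sym2.lift_mk, eq_iff_iff]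
    tauto

lemma no_deg_of_nDeg_zero {j : ℕ} (h : nDeg G j = 0) (v : V) : gdeg G v ≠ j := by
  intro hv
  rw [nDeg, Finset.card_eq_zero] at h
  have : v ∈ Finset.univ.filter (fun v => gdeg G v = j) := mem_filter.mpr ⟨mem_univ v, hv⟩
  rw [h] at this
  exact absurd this (Finset.notMem_empty v)

lemma edge_card_tree (hG : G.IsTree) :
    (Set.toFinite G.edgeSet).toFinset.card + 1 = Fintype.card V := by
  have h := hG.card_edgeFinset
  have hne : Nonempty V := hG.isConnected.nonempty
  have hpos : 0 < Fintype.card V := Fintype.card_pos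
  rw [Efinset_eq]
  omega

lemma fibers_disjoint {p q : Sym2 ℕ} (hpq : p ≠ q) :
    Disjoint ((Set.toFinite G.edgeSet).toFinset.filter (fun e => Sym2.map (gdeg G) e = p))
      ((Set.toFinite G.edgeSet).toFinset.filter (fun e => Sym2.map (gdeg G) e = q)) :=
  Finset.disjoint_left.mpr fun e h1 h2 =>
    hpq (by rw [← (mem_filter.mp h1).2, (mem_filter.mp h2).2])

lemma inside_bound (hG : G.IsTree) (h1 : ∀ v, 1 ≤ gdeg G v) (h4 : ∀ v, gdeg G v ≤ 4) :
    nDeg G 3 + nDeg G 4 = 0 ∨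
      mij G 3 3 + mij G 3 4 + mij G 4 4 + 1 ≤ nDeg G 3 + nDeg G 4 := by
  by_cases hz : nDeg G 3 + nDeg G 4 = 0
  · exact Or.inl hz
  right
  have hcardS : (Finset.univ.filter (fun v => 3 ≤ gdeg G v)).card = nDeg G 3 + nDeg G 4 := by
    rw [nDeg, nDeg]
    have hsplit : Finset.univ.filter (fun v => 3 ≤ gdeg G v) =
        Finset.univ.filter (fun v => gdeg G v = 3) ∪ Finset.univ.filter (fun v => gdeg G v = 4) := by
      ext x
      simp only [mem_filter, mem_union, mem_univ, true_and]
      have := h4 x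
      omega
    rw [hsplit]
    apply Finset.card_union_of_disjoint
    rw [Finset.disjoint_left]
    intro x hx1 hx2
    rw [mem_filter] at hx1 hx2
    omega
  obtain ⟨r, hr⟩ : ∃ r, r ∈ Finset.univ.filter (fun v => 3 ≤ gdeg G v) := by
    have : 0 < (Finset.univ.filter (fun v => 3 ≤ gdeg G v)).card := by omega
    obtain ⟨r, hr⟩ := Finset.card_pos.mp this
    exact ⟨r, hr⟩
  have hin := tree_inside_edges hG (Finset.univ.filter (fun v => 3 ≤ gdeg G v)) hr
  have hfe : (Set.toFinite G.edgeSet).toFinset.filter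
        (fun e => ∀ x ∈ e, x ∈ Finset.univ.filter (fun v => 3 ≤ gdeg G v)) =
      ((Set.toFinite G.edgeSet).toFinset.filter (fun e => Sym2.map (gdeg G) e = s(3,3))) ∪
      ((Set.toFinite G.edgeSet).toFinset.filter (fun e => Sym2.map (gdeg G) e = s(3,4))) ∪
      ((Set.toFinite G.edgeSet).toFinset.filter (fun e => Sym2.map (gdeg G) e = s(4,4))) := by
    ext e
    induction e using Sym2.ind with
    | _ u v =>
      by_cases he : s(u,v) ∈ (Set.toFinite G.edgeSet).toFinset
      · simp only [mem_union, mem_filter, he, true_and, Sym2.mem_iff, or_imp, forall_and,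
          forall_eq, mem_univ, Sym2.map_pair_eq, Sym2.eq_iff]
        have h4u := h4 u
        have h4v := h4 v
        omega
      · constructor
        · intro h'
          exact absurd (Finset.mem_filter.mp h').1 he
        · intro h'
          rcases Finset.mem_union.mp h' with h'' | h''
          · rcases Finset.mem_union.mp h'' with h3 | h3
            · exact absurd (Finset.mem_filter.mp h3).1 he
            · exact absurd (Finset.mem_filter.mp h3).1 he
          · exact absurd (Finset.mem_filter.mp h'').1 he
  rw [hfe] at hin
  rw [Finset.card_union_of_disjoint, Finset.card_union_of_disjoint] at hin
  · rw [mij_eq_fiber G 3 3, mij_eq_fiber G 3 4, mij_eq_fiber G 4 4]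
    omega
  · exact fibers_disjoint (by decide)
  · rw [Finset.disjoint_union_left]
    exact ⟨fibers_disjoint (by decide), fibers_disjoint (by decide)⟩

end

theorem key (m12 m13 m14 m22 m23 m24 m33 m34 m44 n1 n2 n3 n4 n : ℕ)
    (hn : 13 ≤ n)
    (hE : m12+m13+m14+m22+m23+m24+m33+m34+m44+1 = n)
    (h1 : m12+m13+m14 = n1)
    (h2 : m12+2*m22+m23+m24 = 2*n2)
    (h3 : m13+m23+2*m33+m34 = 3*n3)
    (h4 : m14+m24+m34+2*m44 = 4*n4)
    (hN : n1+n2+n3+n4 = n)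
    (hforest : n3+n4 = 0 ∨ m33+m34+m44+1 ≤ n3+n4)
    (hconn : n2 = 0 ∨ 1 ≤ m12+m23+m24)
    (c1 : ¬ (m33=0 ∧ m23=0 ∧ m12=2 ∧ m13=0 ∧ m22+3=n ∧ m14=0 ∧ m24=0 ∧ m34=0 ∧ m44=0))
    (c2 : ¬ (m33=0 ∧ m23=1 ∧ m12=1 ∧ m13=2 ∧ m22+5=n ∧ m14=0 ∧ m24=0 ∧ m34=0 ∧ m44=0))
    (c3 : ¬ (m33=0 ∧ m23=2 ∧ m12=2 ∧ m13=1 ∧ m22+6=n ∧ m14=0 ∧ m24=0 ∧ m34=0 ∧ m44=0))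
    (c4 : ¬ (m33=0 ∧ m23=3 ∧ m12=3 ∧ m13=0 ∧ m22+7=n ∧ m14=0 ∧ m24=0 ∧ m34=0 ∧ m44=0))
    (c5 : ¬ (m33=0 ∧ m23=2 ∧ m12=0 ∧ m13=4 ∧ m22+7=n ∧ m14=0 ∧ m24=0 ∧ m34=0 ∧ m44=0))
    (c6 : ¬ (m33=0 ∧ m23=3 ∧ m12=1 ∧ m13=3 ∧ m22+8=n ∧ m14=0 ∧ m24=0 ∧ m34=0 ∧ m44=0))
    (c7 : ¬ (m33=0 ∧ m23=4 ∧ m12=2 ∧ m13=2 ∧ m22+9=n ∧ m14=0 ∧ m24=0 ∧ m34=0 ∧ m44=0))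
    (c8 : ¬ (m33=1 ∧ m23=1 ∧ m12=1 ∧ m13=3 ∧ m22+7=n ∧ m14=0 ∧ m24=0 ∧ m34=0 ∧ m44=0))
    (c9 : ¬ (m33=0 ∧ m23=5 ∧ m12=3 ∧ m13=1 ∧ m22+10=n ∧ m14=0 ∧ m24=0 ∧ m34=0 ∧ m44=0))
    (c10 : ¬ (m33=1 ∧ m23=2 ∧ m12=2 ∧ m13=2 ∧ m22+8=n ∧ m14=0 ∧ m24=0 ∧ m34=0 ∧ m44=0))
    (c11 : ¬ (m33=0 ∧ m23=6 ∧ m12=4 ∧ m13=0 ∧ m22+11=n ∧ m14=0 ∧ m24=0 ∧ m34=0 ∧ m44=0))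
    (c12 : ¬ (m33=1 ∧ m23=3 ∧ m12=3 ∧ m13=1 ∧ m22+9=n ∧ m14=0 ∧ m24=0 ∧ m34=0 ∧ m44=0))
    (c13 : ¬ (m33=1 ∧ m23=4 ∧ m12=4 ∧ m13=0 ∧ m22+10=n ∧ m14=0 ∧ m24=0 ∧ m34=0 ∧ m44=0))
    (c14 : ¬ (m33=2 ∧ m23=5 ∧ m12=5 ∧ m13=0 ∧ m22+13=n ∧ m14=0 ∧ m24=0 ∧ m34=0 ∧ m44=0)) :
    57000 ≤ 8619*m13+17928*m14+6837*m23+15409*m24+11380*m33+18461*m34+24142*m44 := by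
  rcases Nat.eq_zero_or_pos n4 with h4z | h4p
  · have hm14 : m14 = 0 := by omega
    have hm24 : m24 = 0 := by omega
    have hm34 : m34 = 0 := by omega
    have hm44 : m44 = 0 := by omega
    subst hm14 hm24 hm34 hm44
    rcases Nat.lt_or_ge n3 4 with h3s | h3b
    · interval_cases n3
      · clear c2 c3 c4 c5 c6 c7 c8 c9 c10 c11 c12 c13 c14; omega
      · clear c1 c5 c6 c7 c8 c9 c10 c11 c12 c13 c14
        have hm33 : m33 = 0 := by omega
        subst hm33
        have hub : m13 ≤ 3 := by omega
        interval_cases m13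
        · clear c2 c3; omega
        · clear c2 c4; omega
        · clear c3 c4; omega
        · clear c2 c3 c4; omega
      · clear c1 c2 c3 c4 c14
        have hm33 : m33 ≤ 1 := by omega
        interval_cases m33
        · have hub : m13 ≤ 6 := by omega
          interval_cases m13
          · clear c5 c6 c7 c8 c9 c10 c12 c13; omega
          · clear c5 c6 c7 c8 c10 c11 c12 c13; omega
          · clear c5 c6 c8 c9 c10 c11 c12 c13; omega
          · clear c5 c7 c8 c9 c10 c11 c12 c13; omega
          · clear c6 c7 c8 c9 c10 c11 c12 c13; omega
          · clear c5 c6 c7 c8 c9 c10 c11 c12 c13; omega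
          · clear c5 c6 c7 c8 c9 c10 c11 c12 c13; omega
        · have hub : m13 ≤ 4 := by omega
          interval_cases m13
          · clear c5 c6 c7 c8 c9 c10 c11 c12; omega
          · clear c5 c6 c7 c8 c9 c10 c11 c13; omega
          · clear c5 c6 c7 c8 c9 c11 c12 c13; omega
          · clear c5 c6 c7 c9 c10 c11 c12 c13; omega
          · clear c5 c6 c7 c8 c9 c10 c11 c12 c13; omega
      · clear c1 c2 c3 c4 c5 c6 c7 c8 c9 c10 c11 c12 c13
        have hm33 : m33 ≤ 2 := by omega
        interval_cases m33
        · omega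
        · omega
        · have hub : m13 ≤ 5 := by omega
          interval_cases m13 <;> omega
    · clear c1 c2 c3 c4 c5 c6 c7 c8 c9 c10 c11 c12 c13 c14; omega
  · clear c1 c2 c3 c4 c5 c6 c7 c8 c9 c10 c11 c12 c13 c14
    rcases Nat.eq_zero_or_pos n3 with h3z | h3p
    · omega
    · omega

lemma sqrt2_gt : 1.4142135 < Real.sqrt 2 := by
  rw [show (1.4142135 : ℝ) = Real.sqrt (1.4142135 ^ 2) from (Real.sqrt_sq (by norm_num)).symm]
  apply Real.sqrt_lt_sqrt (by positivity)
  norm_num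

lemma sqrt2_lt : Real.sqrt 2 < 1.4142136 := by
  rw [show (1.4142136 : ℝ) = Real.sqrt (1.4142136 ^ 2) from (Real.sqrt_sq (by norm_num)).symm]
  apply Real.sqrt_lt_sqrt (by positivity)
  norm_num

lemma sqrt5_gt : 2.2360679 < Real.sqrt 5 := by
  rw [show (2.2360679 : ℝ) = Real.sqrt (2.2360679 ^ 2) from (Real.sqrt_sq (by norm_num)).symm]
  apply Real.sqrt_lt_sqrt (by positivity)
  norm_num

lemma sqrt5_lt : Real.sqrt 5 < 2.2360680 := by
  rw [show (2.2360680 : ℝ) = Real.sqrt (2.2360680 ^ 2) from (Real.sqrt_sq (by norm_num)).symm]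
  apply Real.sqrt_lt_sqrt (by positivity)
  norm_num

lemma sqrt10_gt : 3.1622776 < Real.sqrt 10 := by
  rw [show (3.1622776 : ℝ) = Real.sqrt (3.1622776 ^ 2) from (Real.sqrt_sq (by norm_num)).symm]
  apply Real.sqrt_lt_sqrt (by positivity)
  norm_num

lemma sqrt13_gt : 3.6055512 < Real.sqrt 13 := by
  rw [show (3.6055512 : ℝ) = Real.sqrt (3.6055512 ^ 2) from (Real.sqrt_sq (by norm_num)).symm]
  apply Real.sqrt_lt_sqrt (by positivity)
  norm_num

lemma SOred_classA {V : Type*} [Fintype V] {G : SimpleGraph V} {a b c d e : ℕ}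
    (h : InClassA G a b c d e) (hcard : 3 ≤ Fintype.card V) :
    SOred G = (c : ℝ) + d * 2 + e * Real.sqrt 2 + b * Real.sqrt 5 + a * (2 * Real.sqrt 2) := by
  classical
  have hconn := h.1.isConnected
  have hd3 := h.2.1
  have h4 : ∀ v, gdeg G v ≤ 4 := fun v => le_trans (hd3 v) (by norm_num)
  have h1 : ∀ v, 1 ≤ gdeg G v := one_le_gdeg hconn (by omega)
  have hno4 : ∀ v, gdeg G v ≠ 4 := fun v hv => by have := hd3 v; omega
  rw [SOred_decomp h1 h4, mij_eq_zero_of_no_deg 1 hno4, mij_eq_zero_of_no_deg 2 hno4,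
    mij_eq_zero_of_no_deg 3 hno4, mij_eq_zero_of_no_deg 4 hno4,
    h.2.2.2.1, h.2.2.2.2.1, h.2.2.2.2.2.1, h.2.2.2.2.2.2.1, h.2.2.2.2.2.2.2]
  push_cast
  ring

lemma SOred_omega {V : Type*} [Fintype V] {G : SimpleGraph V}
    (h : InOmega G) (hcard : 13 ≤ Fintype.card V) :
    SOred G = 5 + 5 * Real.sqrt 5 + ((Fintype.card V : ℝ) - 9) * Real.sqrt 2 := by
  classical
  obtain ⟨⟨htree, h4⟩, hn3, hn1, hn4, hn2, hm12, hm23, hm13, hm33, hm22⟩ := h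
  have hconn := htree.isConnected
  have h1 : ∀ v, 1 ≤ gdeg G v := one_le_gdeg hconn (by omega)
  have hno4 : ∀ v, gdeg G v ≠ 4 := no_deg_of_nDeg_zero hn4
  rw [SOred_decomp h1 h4, mij_eq_zero_of_no_deg 1 hno4, mij_eq_zero_of_no_deg 2 hno4,
    mij_eq_zero_of_no_deg 3 hno4, mij_eq_zero_of_no_deg 4 hno4,
    hm12, hm23, hm13, hm33, hm22]
  rw [Nat.cast_sub (by omega)]
  push_cast
  ring

lemma mk_classA {V : Type*} [Fintype V] {G : SimpleGraph V} {a b c d e : ℕ}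
    (hT : IsChemicalTree G) (hn4 : nDeg G 4 = 0) (hn3 : nDeg G 3 ≤ 2)
    (h33 : mij G 3 3 = a) (h23 : mij G 2 3 = b) (h12 : mij G 1 2 = c)
    (h13 : mij G 1 3 = d) (h22 : mij G 2 2 = e) : InClassA G a b c d e :=
  ⟨hT.1, fun v => by have := hT.2 v; have := no_deg_of_nDeg_zero hn4 v; omega,
    hn3, h33, h23, h12, h13, h22⟩


lemma not_pattern {V : Type*} [Fintype V] {T : SimpleGraph V} {a b c d k n : ℕ}
    (hT : IsChemicalTree T) (hc : Fintype.card V = n) (hk : k ≤ n)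
    (hA : ¬ InClassA T a b c d (n - k))
    (d3 : mij T 1 3 + mij T 2 3 + 2 * mij T 3 3 + mij T 3 4 = 3 * nDeg T 3)
    (d4 : mij T 1 4 + mij T 2 4 + mij T 3 4 + 2 * mij T 4 4 = 4 * nDeg T 4)
    (hab : d + b + 2 * a ≤ 6) :
    ¬ (mij T 3 3 = a ∧ mij T 2 3 = b ∧ mij T 1 2 = c ∧ mij T 1 3 = d ∧
      mij T 2 2 + k = n ∧ mij T 1 4 = 0 ∧ mij T 2 4 = 0 ∧ mij T 3 4 = 0 ∧ mij T 4 4 = 0) := by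
  intro h
  obtain ⟨e33, e23, e12, e13, e22, e14, e24, e34, e44⟩ := h
  apply hA
  clear hA
  exact mk_classA hT (by omega) (by omega) e33 e23 e12 e13 (by omega)

lemma not_omega_pattern {V : Type*} [Fintype V] {T : SimpleGraph V} {n : ℕ}
    (hT : IsChemicalTree T) (hc : Fintype.card V = n) (hn : 13 ≤ n)
    (hA : ¬ InOmega T) (hm11 : mij T 1 1 = 0)
    (d1 : 2 * mij T 1 1 + mij T 1 2 + mij T 1 3 + mij T 1 4 = 1 * nDeg T 1)
    (d3 : mij T 1 3 + mij T 2 3 + 2 * mij T 3 3 + mij T 3 4 = 3 * nDeg T 3)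
    (d4 : mij T 1 4 + mij T 2 4 + mij T 3 4 + 2 * mij T 4 4 = 4 * nDeg T 4)
    (hNs : nDeg T 1 + nDeg T 2 + nDeg T 3 + nDeg T 4 = n) :
    ¬ (mij T 3 3 = 2 ∧ mij T 2 3 = 5 ∧ mij T 1 2 = 5 ∧ mij T 1 3 = 0 ∧
      mij T 2 2 + 13 = n ∧ mij T 1 4 = 0 ∧ mij T 2 4 = 0 ∧ mij T 3 4 = 0 ∧ mij T 4 4 = 0) := by
  intro h
  obtain ⟨e33, e23, e12, e13, e22, e14, e24, e34, e44⟩ := h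
  apply hA
  clear hA
  exact ⟨hT, by omega, by omega, by omega, by rw [hc]; omega,
    e12, e23, e13, e33, by rw [hc]; omega⟩


lemma main_bound {V : Type*} [Fintype V] {T : SimpleGraph V} {n : ℕ} (hn : 13 ≤ n)
    (hc : Fintype.card V = n) (hT : IsChemicalTree T)
    (hTnot : ¬ InClassA T 0 0 2 0 (n - 3) ∧
      ¬ InClassA T 0 1 1 2 (n - 5) ∧
      ¬ InClassA T 0 2 2 1 (n - 6) ∧
      ¬ InClassA T 0 3 3 0 (n - 7) ∧
      ¬ InClassA T 0 2 0 4 (n - 7) ∧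
      ¬ InClassA T 0 3 1 3 (n - 8) ∧
      ¬ InClassA T 0 4 2 2 (n - 9) ∧
      ¬ InClassA T 1 1 1 3 (n - 7) ∧
      ¬ InClassA T 0 5 3 1 (n - 10) ∧
      ¬ InClassA T 1 2 2 2 (n - 8) ∧
      ¬ InClassA T 0 6 4 0 (n - 11) ∧
      ¬ InClassA T 1 3 3 1 (n - 9) ∧
      ¬ InClassA T 1 4 4 0 (n - 10) ∧
      ¬ InOmega T) :
    (5:ℝ) + 5 * Real.sqrt 5 + ((n:ℝ) - 9) * Real.sqrt 2 < SOred T := by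
  classical
  have s2g := sqrt2_gt
  have s2l := sqrt2_lt
  have s5g := sqrt5_gt
  have s5l := sqrt5_lt
  have s10g := sqrt10_gt
  have s13g := sqrt13_gt
  obtain ⟨hA1, hA2, hA3, hA4, hA5, hA6, hA7, hA8, hA9, hA10, hA11, hA12, hA13, hOm⟩ := hTnot
  have htree := hT.1
  have h4d := hT.2
  have hconnT := htree.isConnected
  have h1d : ∀ v, 1 ≤ gdeg T v := one_le_gdeg hconnT (by rw [hc]; exact le_trans (by norm_num) hn)
  have hm11 : mij T 1 1 = 0 := mij11_eq_zero hconnT (by rw [hc]; exact le_trans (by norm_num) hn)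
  have hedge : (Set.toFinite T.edgeSet).toFinset.card + 1 = n := by
    rw [edge_card_tree htree, hc]
  have hEdec := edge_count_decomp h1d h4d
  have d1 := deg_id_1 h1d h4d
  have d2 := deg_id_2 h1d h4d
  have d3 := deg_id_3 h1d h4d
  have d4 := deg_id_4 h1d h4d
  have hNs : nDeg T 1 + nDeg T 2 + nDeg T 3 + nDeg T 4 = n := by
    rw [nDeg_sum h1d h4d, hc]
  have hforest := inside_bound htree h1d h4d
  -- connectivity condition
  have hconn2 : nDeg T 2 = 0 ∨ 1 ≤ mij T 1 2 + mij T 2 3 + mij T 2 4 := by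
    by_cases hn2 : nDeg T 2 = 0
    · exact Or.inl hn2
    right
    obtain ⟨u, hu⟩ := Finset.card_pos.mp
      (show 0 < (Finset.univ.filter (fun v => gdeg T v = 2)).card from Nat.pos_of_ne_zero hn2)
    have hu2 : gdeg T u = 2 := (Finset.mem_filter.mp hu).2
    have hn1pos : 1 ≤ nDeg T 1 := by omega
    obtain ⟨w, hw⟩ := Finset.card_pos.mp
      (show 0 < (Finset.univ.filter (fun v => gdeg T v = 1)).card from hn1pos)
    have hw1 : gdeg T w = 1 := (Finset.mem_filter.mp hw).2
    obtain ⟨p⟩ := hconnT.preconnected u w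
    obtain ⟨x, y, hxy, hPx, hPy⟩ :=
      walk_boundary (fun z => gdeg T z = 2) p hu2 (by omega)
    have hy1 := h1d y
    have hy4 := h4d y
    have hycase : gdeg T y = 1 ∨ gdeg T y = 3 ∨ gdeg T y = 4 := by omega
    rcases hycase with hy | hy | hy
    · have := one_le_mij hxy hPx hy
      have := mij_comm (G := T) 1 2
      omega
    · have := one_le_mij hxy hPx hy
      omega
    · have := one_le_mij hxy hPx hy
      omega
  -- exclusion conditions
  have c1 := not_pattern (k := 3) hT hc (le_trans (by norm_num) hn) hA1 d3 d4 (by norm_num)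
  have c2 := not_pattern (k := 5) hT hc (le_trans (by norm_num) hn) hA2 d3 d4 (by norm_num)
  have c3 := not_pattern (k := 6) hT hc (le_trans (by norm_num) hn) hA3 d3 d4 (by norm_num)
  have c4 := not_pattern (k := 7) hT hc (le_trans (by norm_num) hn) hA4 d3 d4 (by norm_num)
  have c5 := not_pattern (k := 7) hT hc (le_trans (by norm_num) hn) hA5 d3 d4 (by norm_num)
  have c6 := not_pattern (k := 8) hT hc (le_trans (by norm_num) hn) hA6 d3 d4 (by norm_num)
  have c7 := not_pattern (k := 9) hT hc (le_trans (by norm_num) hn) hA7 d3 d4 (by norm_num)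
  have c8 := not_pattern (k := 7) hT hc (le_trans (by norm_num) hn) hA8 d3 d4 (by norm_num)
  have c9 := not_pattern (k := 10) hT hc (le_trans (by norm_num) hn) hA9 d3 d4 (by norm_num)
  have c10 := not_pattern (k := 8) hT hc (le_trans (by norm_num) hn) hA10 d3 d4 (by norm_num)
  have c11 := not_pattern (k := 11) hT hc (le_trans (by norm_num) hn) hA11 d3 d4 (by norm_num)
  have c12 := not_pattern (k := 9) hT hc (le_trans (by norm_num) hn) hA12 d3 d4 (by norm_num)
  have c13 := not_pattern (k := 10) hT hc (le_trans (by norm_num) hn) hA13 d3 d4 (by norm_num)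
  have c14 := not_omega_pattern hT hc hn hOm hm11 d1 d3 d4 hNs
  clear hA1 hA2 hA3 hA4 hA5 hA6 hA7 hA8 hA9 hA10 hA11 hA12 hA13 hOm
  have hkey := key (mij T 1 2) (mij T 1 3) (mij T 1 4) (mij T 2 2) (mij T 2 3) (mij T 2 4)
    (mij T 3 3) (mij T 3 4) (mij T 4 4) (nDeg T 1) (nDeg T 2) (nDeg T 3) (nDeg T 4) n hn
    (by omega) (by omega) (by omega) (by omega) (by omega) (by omega) hforest hconn2
    c1 c2 c3 c4 c5 c6 c7 c8 c9 c10 c11 c12 c13 c14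
  -- move to the reals
  have hSO := SOred_decomp h1d h4d
  have KR : (57000:ℝ) ≤ 8619*(mij T 1 3 : ℝ) + 17928*(mij T 1 4 : ℝ) + 6837*(mij T 2 3 : ℝ)
      + 15409*(mij T 2 4 : ℝ) + 11380*(mij T 3 3 : ℝ) + 18461*(mij T 3 4 : ℝ)
      + 24142*(mij T 4 4 : ℝ) := by exact_mod_cast hkey
  have EE : (mij T 1 2 : ℝ) + mij T 1 3 + mij T 1 4 + mij T 2 2 + mij T 2 3 + mij T 2 4
      + mij T 3 3 + mij T 3 4 + mij T 4 4 + 1 = (n : ℝ) := by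
    exact_mod_cast (show mij T 1 2 + mij T 1 3 + mij T 1 4 + mij T 2 2 + mij T 2 3 + mij T 2 4
      + mij T 3 3 + mij T 3 4 + mij T 4 4 + 1 = n by omega)
  have E1 : (mij T 1 2 : ℝ) + mij T 1 3 + mij T 1 4 = (nDeg T 1 : ℝ) := by
    exact_mod_cast (show mij T 1 2 + mij T 1 3 + mij T 1 4 = nDeg T 1 by omega)
  have E2 : (mij T 1 2 : ℝ) + 2*(mij T 2 2 : ℝ) + mij T 2 3 + mij T 2 4 = 2*(nDeg T 2 : ℝ) := by
    exact_mod_cast (show mij T 1 2 + 2*mij T 2 2 + mij T 2 3 + mij T 2 4 = 2*nDeg T 2 by omega)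
  have E3 : (mij T 1 3 : ℝ) + mij T 2 3 + 2*(mij T 3 3 : ℝ) + mij T 3 4 = 3*(nDeg T 3 : ℝ) := by
    exact_mod_cast (show mij T 1 3 + mij T 2 3 + 2*mij T 3 3 + mij T 3 4 = 3*nDeg T 3 by omega)
  have E4 : (mij T 1 4 : ℝ) + mij T 2 4 + mij T 3 4 + 2*(mij T 4 4 : ℝ) = 4*(nDeg T 4 : ℝ) := by
    exact_mod_cast (show mij T 1 4 + mij T 2 4 + mij T 3 4 + 2*mij T 4 4 = 4*nDeg T 4 by omega)
  have EN : (nDeg T 1 : ℝ) + nDeg T 2 + nDeg T 3 + nDeg T 4 = (n : ℝ) := by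
    exact_mod_cast hNs
  have EEs : (mij T 1 2 : ℝ)*Real.sqrt 2 + (mij T 1 3 : ℝ)*Real.sqrt 2
      + (mij T 1 4 : ℝ)*Real.sqrt 2 + (mij T 2 2 : ℝ)*Real.sqrt 2 + (mij T 2 3 : ℝ)*Real.sqrt 2
      + (mij T 2 4 : ℝ)*Real.sqrt 2 + (mij T 3 3 : ℝ)*Real.sqrt 2 + (mij T 3 4 : ℝ)*Real.sqrt 2
      + (mij T 4 4 : ℝ)*Real.sqrt 2 + Real.sqrt 2 = (n : ℝ)*Real.sqrt 2 := by
    rw [← EE]; ring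
  have E1s : (mij T 1 2 : ℝ)*Real.sqrt 2 + (mij T 1 3 : ℝ)*Real.sqrt 2
      + (mij T 1 4 : ℝ)*Real.sqrt 2 = (nDeg T 1 : ℝ)*Real.sqrt 2 := by
    rw [← E1]; ring
  have E2s : (mij T 1 2 : ℝ)*Real.sqrt 2 + 2*((mij T 2 2 : ℝ)*Real.sqrt 2)
      + (mij T 2 3 : ℝ)*Real.sqrt 2 + (mij T 2 4 : ℝ)*Real.sqrt 2
      = 2*((nDeg T 2 : ℝ)*Real.sqrt 2) := by
    have : ((mij T 1 2 : ℝ) + 2*(mij T 2 2 : ℝ) + mij T 2 3 + mij T 2 4)*Real.sqrt 2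
        = (2*(nDeg T 2 : ℝ))*Real.sqrt 2 := by rw [E2]
    linarith [this, sq_nonneg (Real.sqrt 2)]
  have E3s : (mij T 1 3 : ℝ)*Real.sqrt 2 + (mij T 2 3 : ℝ)*Real.sqrt 2
      + 2*((mij T 3 3 : ℝ)*Real.sqrt 2) + (mij T 3 4 : ℝ)*Real.sqrt 2
      = 3*((nDeg T 3 : ℝ)*Real.sqrt 2) := by
    have : ((mij T 1 3 : ℝ) + mij T 2 3 + 2*(mij T 3 3 : ℝ) + mij T 3 4)*Real.sqrt 2
        = (3*(nDeg T 3 : ℝ))*Real.sqrt 2 := by rw [E3]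
    linarith [this]
  have E4s : (mij T 1 4 : ℝ)*Real.sqrt 2 + (mij T 2 4 : ℝ)*Real.sqrt 2
      + (mij T 3 4 : ℝ)*Real.sqrt 2 + 2*((mij T 4 4 : ℝ)*Real.sqrt 2)
      = 4*((nDeg T 4 : ℝ)*Real.sqrt 2) := by
    have : ((mij T 1 4 : ℝ) + mij T 2 4 + mij T 3 4 + 2*(mij T 4 4 : ℝ))*Real.sqrt 2
        = (4*(nDeg T 4 : ℝ))*Real.sqrt 2 := by rw [E4]
    linarith [this]
  have ENs : (nDeg T 1 : ℝ)*Real.sqrt 2 + (nDeg T 2 : ℝ)*Real.sqrt 2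
      + (nDeg T 3 : ℝ)*Real.sqrt 2 + (nDeg T 4 : ℝ)*Real.sqrt 2 = (n : ℝ)*Real.sqrt 2 := by
    rw [← EN]; ring
  -- product bounds
  have B12u : (mij T 1 2 : ℝ)*Real.sqrt 2 ≤ (mij T 1 2 : ℝ)*1.4142136 :=
    mul_le_mul_of_nonneg_left (le_of_lt s2l) (Nat.cast_nonneg _)
  have B12l : (mij T 1 2 : ℝ)*1.4142135 ≤ (mij T 1 2 : ℝ)*Real.sqrt 2 :=
    mul_le_mul_of_nonneg_left (le_of_lt s2g) (Nat.cast_nonneg _)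
  have B13u : (mij T 1 3 : ℝ)*Real.sqrt 2 ≤ (mij T 1 3 : ℝ)*1.4142136 :=
    mul_le_mul_of_nonneg_left (le_of_lt s2l) (Nat.cast_nonneg _)
  have B13l : (mij T 1 3 : ℝ)*1.4142135 ≤ (mij T 1 3 : ℝ)*Real.sqrt 2 :=
    mul_le_mul_of_nonneg_left (le_of_lt s2g) (Nat.cast_nonneg _)
  have B14u : (mij T 1 4 : ℝ)*Real.sqrt 2 ≤ (mij T 1 4 : ℝ)*1.4142136 :=
    mul_le_mul_of_nonneg_left (le_of_lt s2l) (Nat.cast_nonneg _)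
  have B14l : (mij T 1 4 : ℝ)*1.4142135 ≤ (mij T 1 4 : ℝ)*Real.sqrt 2 :=
    mul_le_mul_of_nonneg_left (le_of_lt s2g) (Nat.cast_nonneg _)
  have B22u : (mij T 2 2 : ℝ)*Real.sqrt 2 ≤ (mij T 2 2 : ℝ)*1.4142136 :=
    mul_le_mul_of_nonneg_left (le_of_lt s2l) (Nat.cast_nonneg _)
  have B22l : (mij T 2 2 : ℝ)*1.4142135 ≤ (mij T 2 2 : ℝ)*Real.sqrt 2 :=
    mul_le_mul_of_nonneg_left (le_of_lt s2g) (Nat.cast_nonneg _)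
  have B23u : (mij T 2 3 : ℝ)*Real.sqrt 2 ≤ (mij T 2 3 : ℝ)*1.4142136 :=
    mul_le_mul_of_nonneg_left (le_of_lt s2l) (Nat.cast_nonneg _)
  have B23l : (mij T 2 3 : ℝ)*1.4142135 ≤ (mij T 2 3 : ℝ)*Real.sqrt 2 :=
    mul_le_mul_of_nonneg_left (le_of_lt s2g) (Nat.cast_nonneg _)
  have B24u : (mij T 2 4 : ℝ)*Real.sqrt 2 ≤ (mij T 2 4 : ℝ)*1.4142136 :=
    mul_le_mul_of_nonneg_left (le_of_lt s2l) (Nat.cast_nonneg _)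
  have B24l : (mij T 2 4 : ℝ)*1.4142135 ≤ (mij T 2 4 : ℝ)*Real.sqrt 2 :=
    mul_le_mul_of_nonneg_left (le_of_lt s2g) (Nat.cast_nonneg _)
  have B33u : (mij T 3 3 : ℝ)*Real.sqrt 2 ≤ (mij T 3 3 : ℝ)*1.4142136 :=
    mul_le_mul_of_nonneg_left (le_of_lt s2l) (Nat.cast_nonneg _)
  have B33l : (mij T 3 3 : ℝ)*1.4142135 ≤ (mij T 3 3 : ℝ)*Real.sqrt 2 :=
    mul_le_mul_of_nonneg_left (le_of_lt s2g) (Nat.cast_nonneg _)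
  have B34u : (mij T 3 4 : ℝ)*Real.sqrt 2 ≤ (mij T 3 4 : ℝ)*1.4142136 :=
    mul_le_mul_of_nonneg_left (le_of_lt s2l) (Nat.cast_nonneg _)
  have B34l : (mij T 3 4 : ℝ)*1.4142135 ≤ (mij T 3 4 : ℝ)*Real.sqrt 2 :=
    mul_le_mul_of_nonneg_left (le_of_lt s2g) (Nat.cast_nonneg _)
  have B44u : (mij T 4 4 : ℝ)*Real.sqrt 2 ≤ (mij T 4 4 : ℝ)*1.4142136 :=
    mul_le_mul_of_nonneg_left (le_of_lt s2l) (Nat.cast_nonneg _)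
  have B44l : (mij T 4 4 : ℝ)*1.4142135 ≤ (mij T 4 4 : ℝ)*Real.sqrt 2 :=
    mul_le_mul_of_nonneg_left (le_of_lt s2g) (Nat.cast_nonneg _)
  have C23 : (mij T 2 3 : ℝ)*2.2360679 ≤ (mij T 2 3 : ℝ)*Real.sqrt 5 :=
    mul_le_mul_of_nonneg_left (le_of_lt s5g) (Nat.cast_nonneg _)
  have C24 : (mij T 2 4 : ℝ)*3.1622776 ≤ (mij T 2 4 : ℝ)*Real.sqrt 10 :=
    mul_le_mul_of_nonneg_left (le_of_lt s10g) (Nat.cast_nonneg _)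
  have C34 : (mij T 3 4 : ℝ)*3.6055512 ≤ (mij T 3 4 : ℝ)*Real.sqrt 13 :=
    mul_le_mul_of_nonneg_left (le_of_lt s13g) (Nat.cast_nonneg _)
  rw [hSO]
  linarith only [s2g, s2l, s5g, s5l, KR, EE, E1, E2, E3, E4, EN, EEs, E1s, E2s, E3s, E4s, ENs,
    B12u, B12l, B13u, B13l, B14u, B14l, B22u, B22l, B23u, B23l, B24u, B24l,
    B33u, B33l, B34u, B34l, B44u, B44l, C23, C24, C34]


set_option maxHeartbeats 1600000 in
/-- thm34: ordering of chemical trees on n ≥ 13 vertices by the index `SOred`. -/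
theorem thm34 (n : ℕ) (hn : 13 ≤ n)
    {V1 : Type*} [Fintype V1] (T1 : SimpleGraph V1) (hc1 : Fintype.card V1 = n)
    {V2 : Type*} [Fintype V2] (T2 : SimpleGraph V2) (hc2 : Fintype.card V2 = n)
    {V3 : Type*} [Fintype V3] (T3 : SimpleGraph V3) (hc3 : Fintype.card V3 = n)
    {V4 : Type*} [Fintype V4] (T4 : SimpleGraph V4) (hc4 : Fintype.card V4 = n)
    {V5 : Type*} [Fintype V5] (T5 : SimpleGraph V5) (hc5 : Fintype.card V5 = n)
    {V6 : Type*} [Fintype V6] (T6 : SimpleGraph V6) (hc6 : Fintype.card V6 = n)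
    {V7 : Type*} [Fintype V7] (T7 : SimpleGraph V7) (hc7 : Fintype.card V7 = n)
    {V8 : Type*} [Fintype V8] (T8 : SimpleGraph V8) (hc8 : Fintype.card V8 = n)
    {V9 : Type*} [Fintype V9] (T9 : SimpleGraph V9) (hc9 : Fintype.card V9 = n)
    {V10 : Type*} [Fintype V10] (T10 : SimpleGraph V10) (hc10 : Fintype.card V10 = n)
    {V11 : Type*} [Fintype V11] (T11 : SimpleGraph V11) (hc11 : Fintype.card V11 = n)
    {V12 : Type*} [Fintype V12] (T12 : SimpleGraph V12) (hc12 : Fintype.card V12 = n)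
    {V13 : Type*} [Fintype V13] (T13 : SimpleGraph V13) (hc13 : Fintype.card V13 = n)
    {V14 : Type*} [Fintype V14] (T14 : SimpleGraph V14) (hc14 : Fintype.card V14 = n)
    {V : Type*} [Fintype V] (T : SimpleGraph V) (hc : Fintype.card V = n)
    (h1 : InClassA T1 0 0 2 0 (n - 3))
    (h2 : InClassA T2 0 3 3 0 (n - 7))
    (h3 : InClassA T3 0 2 2 1 (n - 6))
    (h4 : InClassA T4 0 1 1 2 (n - 5))
    (h5 : InClassA T5 1 4 4 0 (n - 10))
    (h6 : InClassA T6 1 3 3 1 (n - 9))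
    (h7 : InClassA T7 0 6 4 0 (n - 11))
    (h8 : InClassA T8 1 2 2 2 (n - 8))
    (h9 : InClassA T9 0 5 3 1 (n - 10))
    (h10 : InClassA T10 1 1 1 3 (n - 7))
    (h11 : InClassA T11 0 4 2 2 (n - 9))
    (h12 : InClassA T12 0 3 1 3 (n - 8))
    (h13 : InClassA T13 0 2 0 4 (n - 7))
    (h14 : InOmega T14)
    (hT : IsChemicalTree T)
    (hTnot : ¬ InClassA T 0 0 2 0 (n - 3) ∧
      ¬ InClassA T 0 1 1 2 (n - 5) ∧
      ¬ InClassA T 0 2 2 1 (n - 6) ∧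
      ¬ InClassA T 0 3 3 0 (n - 7) ∧
      ¬ InClassA T 0 2 0 4 (n - 7) ∧
      ¬ InClassA T 0 3 1 3 (n - 8) ∧
      ¬ InClassA T 0 4 2 2 (n - 9) ∧
      ¬ InClassA T 1 1 1 3 (n - 7) ∧
      ¬ InClassA T 0 5 3 1 (n - 10) ∧
      ¬ InClassA T 1 2 2 2 (n - 8) ∧
      ¬ InClassA T 0 6 4 0 (n - 11) ∧
      ¬ InClassA T 1 3 3 1 (n - 9) ∧
      ¬ InClassA T 1 4 4 0 (n - 10) ∧
      ¬ InOmega T) :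
    SOred T1 < SOred T2 ∧
    SOred T2 < SOred T3 ∧
    SOred T3 < SOred T4 ∧
    SOred T4 < SOred T5 ∧
    SOred T5 < SOred T6 ∧
    SOred T6 < SOred T7 ∧
    SOred T7 < SOred T8 ∧
    SOred T8 < SOred T9 ∧
    SOred T9 < SOred T10 ∧
    SOred T10 < SOred T11 ∧
    SOred T11 < SOred T12 ∧
    SOred T12 < SOred T13 ∧
    SOred T13 < SOred T14 ∧
    SOred T14 < SOred T := by
    classical
  classical
  have s2g := sqrt2_gt
  have s2l := sqrt2_lt
  have s5g := sqrt5_gt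
  have s5l := sqrt5_lt
  have s10g := sqrt10_gt
  have s13g := sqrt13_gt
  -- formulas for the fourteen given trees
  have f1 : SOred T1 = (2:ℝ) + 0 * Real.sqrt 5 + ((n:ℝ) - 3) * Real.sqrt 2 := by
    rw [SOred_classA h1 (by rw [hc1]; exact le_trans (by norm_num) hn), Nat.cast_sub (le_trans (by norm_num) hn : 3 ≤ n)]; push_cast; ring
  have f2 : SOred T2 = (3:ℝ) + 3 * Real.sqrt 5 + ((n:ℝ) - 7) * Real.sqrt 2 := by
    rw [SOred_classA h2 (by rw [hc2]; exact le_trans (by norm_num) hn), Nat.cast_sub (le_trans (by norm_num) hn : 7 ≤ n)]; push_cast; ring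
  have f3 : SOred T3 = (4:ℝ) + 2 * Real.sqrt 5 + ((n:ℝ) - 6) * Real.sqrt 2 := by
    rw [SOred_classA h3 (by rw [hc3]; exact le_trans (by norm_num) hn), Nat.cast_sub (le_trans (by norm_num) hn : 6 ≤ n)]; push_cast; ring
  have f4 : SOred T4 = (5:ℝ) + 1 * Real.sqrt 5 + ((n:ℝ) - 5) * Real.sqrt 2 := by
    rw [SOred_classA h4 (by rw [hc4]; exact le_trans (by norm_num) hn), Nat.cast_sub (le_trans (by norm_num) hn : 5 ≤ n)]; push_cast; ring
  have f5 : SOred T5 = (4:ℝ) + 4 * Real.sqrt 5 + ((n:ℝ) - 8) * Real.sqrt 2 := by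
    rw [SOred_classA h5 (by rw [hc5]; exact le_trans (by norm_num) hn), Nat.cast_sub (le_trans (by norm_num) hn : 10 ≤ n)]; push_cast; ring
  have f6 : SOred T6 = (5:ℝ) + 3 * Real.sqrt 5 + ((n:ℝ) - 7) * Real.sqrt 2 := by
    rw [SOred_classA h6 (by rw [hc6]; exact le_trans (by norm_num) hn), Nat.cast_sub (le_trans (by norm_num) hn : 9 ≤ n)]; push_cast; ring
  have f7 : SOred T7 = (4:ℝ) + 6 * Real.sqrt 5 + ((n:ℝ) - 11) * Real.sqrt 2 := by
    rw [SOred_classA h7 (by rw [hc7]; exact le_trans (by norm_num) hn), Nat.cast_sub (le_trans (by norm_num) hn : 11 ≤ n)]; push_cast; ring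
  have f8 : SOred T8 = (6:ℝ) + 2 * Real.sqrt 5 + ((n:ℝ) - 6) * Real.sqrt 2 := by
    rw [SOred_classA h8 (by rw [hc8]; exact le_trans (by norm_num) hn), Nat.cast_sub (le_trans (by norm_num) hn : 8 ≤ n)]; push_cast; ring
  have f9 : SOred T9 = (5:ℝ) + 5 * Real.sqrt 5 + ((n:ℝ) - 10) * Real.sqrt 2 := by
    rw [SOred_classA h9 (by rw [hc9]; exact le_trans (by norm_num) hn), Nat.cast_sub (le_trans (by norm_num) hn : 10 ≤ n)]; push_cast; ring
  have f10 : SOred T10 = (7:ℝ) + 1 * Real.sqrt 5 + ((n:ℝ) - 5) * Real.sqrt 2 := by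
    rw [SOred_classA h10 (by rw [hc10]; exact le_trans (by norm_num) hn), Nat.cast_sub (le_trans (by norm_num) hn : 7 ≤ n)]; push_cast; ring
  have f11 : SOred T11 = (6:ℝ) + 4 * Real.sqrt 5 + ((n:ℝ) - 9) * Real.sqrt 2 := by
    rw [SOred_classA h11 (by rw [hc11]; exact le_trans (by norm_num) hn), Nat.cast_sub (le_trans (by norm_num) hn : 9 ≤ n)]; push_cast; ring
  have f12 : SOred T12 = (7:ℝ) + 3 * Real.sqrt 5 + ((n:ℝ) - 8) * Real.sqrt 2 := by
    rw [SOred_classA h12 (by rw [hc12]; exact le_trans (by norm_num) hn), Nat.cast_sub (le_trans (by norm_num) hn : 8 ≤ n)]; push_cast; ring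
  have f13 : SOred T13 = (8:ℝ) + 2 * Real.sqrt 5 + ((n:ℝ) - 7) * Real.sqrt 2 := by
    rw [SOred_classA h13 (by rw [hc13]; exact le_trans (by norm_num) hn), Nat.cast_sub (le_trans (by norm_num) hn : 7 ≤ n)]; push_cast; ring
  have f14 : SOred T14 = (5:ℝ) + 5 * Real.sqrt 5 + ((n:ℝ) - 9) * Real.sqrt 2 := by
    rw [SOred_omega h14 (by rw [hc14]; exact hn), hc14]
  have hbig := main_bound hn hc hT hTnot
  refine ⟨?_, ?_, ?_, ?_, ?_, ?_, ?_, ?_, ?_, ?_, ?_, ?_, ?_, ?_⟩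
  · rw [f1, f2]; linarith only [s2g, s2l, s5g, s5l]
  · rw [f2, f3]; linarith only [s2g, s2l, s5g, s5l]
  · rw [f3, f4]; linarith only [s2g, s2l, s5g, s5l]
  · rw [f4, f5]; linarith only [s2g, s2l, s5g, s5l]
  · rw [f5, f6]; linarith only [s2g, s2l, s5g, s5l]
  · rw [f6, f7]; linarith only [s2g, s2l, s5g, s5l]
  · rw [f7, f8]; linarith only [s2g, s2l, s5g, s5l]
  · rw [f8, f9]; linarith only [s2g, s2l, s5g, s5l]
  · rw [f9, f10]; linarith only [s2g, s2l, s5g, s5l]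
  · rw [f10, f11]; linarith only [s2g, s2l, s5g, s5l]
  · rw [f11, f12]; linarith only [s2g, s2l, s5g, s5l]
  · rw [f12, f13]; linarith only [s2g, s2l, s5g, s5l]
  · rw [f13, f14]; linarith only [s2g, s2l, s5g, s5l]
  · rw [f14]; exact hbig
end

section
/- Let n ≥ 6 and let G1 ∈ β2, G2 ∈ β3, G3 ∈ β9 be chemical bicyclic graphs on n vertices. Then SO_red(G1) < SO_red(G2) < SO_red(G3), and every chemical bicyclic graph G on n vertices belonging to none of the classes β2, β3, β9 satisfies SO_red(G3) < SO_red(G). -/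
open SimpleGraph

/-- A chemical bicyclic graph: connected, one more edge than vertices, max degree at most 4. -/
def IsChemicalBicyclic {V : Type*} [Fintype V] (G : SimpleGraph V) : Prop :=
  G.Connected ∧ numEdges G = Fintype.card V + 1 ∧ ∀ v, gdeg G v ≤ 4

/-- The class β₂. -/
def InBeta2 {V : Type*} [Fintype V] (G : SimpleGraph V) : Prop :=
  IsChemicalBicyclic G ∧ nDeg G 3 = 2 ∧ nDeg G 2 = Fintype.card V - 2 ∧
    mij G 2 3 = 4 ∧ mij G 3 3 = 1 ∧ mij G 2 2 = Fintype.card V - 4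

/-- The class β₃. -/
def InBeta3 {V : Type*} [Fintype V] (G : SimpleGraph V) : Prop :=
  IsChemicalBicyclic G ∧ nDeg G 3 = 2 ∧ nDeg G 2 = Fintype.card V - 2 ∧
    mij G 2 3 = 6 ∧ mij G 2 2 = Fintype.card V - 5

/-- The class β₉. -/
def InBeta9 {V : Type*} [Fintype V] (G : SimpleGraph V) : Prop :=
  IsChemicalBicyclic G ∧ nDeg G 3 = 3 ∧ nDeg G 1 = 1 ∧
    nDeg G 2 = Fintype.card V - 4 ∧
    mij G 1 2 = 1 ∧ mij G 2 3 = 3 ∧ mij G 3 3 = 3 ∧ mij G 2 2 = Fintype.card V - 6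

namespace SomborAux

variable {V : Type*} [Fintype V] (G : SimpleGraph V)

set_option maxHeartbeats 4000000

lemma sqrt2_gt : 1.414213 < Real.sqrt 2 := by rw [Real.lt_sqrt (by norm_num)]; norm_num
lemma sqrt2_lt : Real.sqrt 2 < 1.414214 := by rw [Real.sqrt_lt' (by norm_num)]; norm_num
lemma sqrt5_gt : 2.236067 < Real.sqrt 5 := by rw [Real.lt_sqrt (by norm_num)]; norm_num
lemma sqrt5_lt : Real.sqrt 5 < 2.236068 := by rw [Real.sqrt_lt' (by norm_num)]; norm_num
lemma sqrt10_gt : 3.162277 < Real.sqrt 10 := by rw [Real.lt_sqrt (by norm_num)]; norm_num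
lemma sqrt10_lt : Real.sqrt 10 < 3.162278 := by rw [Real.sqrt_lt' (by norm_num)]; norm_num
lemma sqrt13_gt : 3.605551 < Real.sqrt 13 := by rw [Real.lt_sqrt (by norm_num)]; norm_num
lemma sqrt13_lt : Real.sqrt 13 < 3.605552 := by rw [Real.sqrt_lt' (by norm_num)]; norm_num

lemma keyS (n e11 e12 e13 e14 e22 e23 e24 e33 e34 e44 n1 n2 n3 n4 : ℕ)
    (h1 : e11+e12+e13+e14+e22+e23+e24+e33+e34+e44 = n+1)
    (h2 : n1+n2+n3+n4 = n)
    (h3 : n1 = e12+e13+e14+2*e11)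
    (h4 : 2*n2 = e12+e23+e24+2*e22)
    (h5 : 3*n3 = e13+e23+e34+2*e33)
    (h6 : 4*n4 = e14+e24+e34+2*e44)
    (h7 : 2*e33 ≤ n3*(n3-1)) (h8 : 2*e44 ≤ n4*(n4-1))
    (hn : 6 ≤ n)
    (hp2 : ¬(e23=4 ∧ e33=1 ∧ e22=n-4 ∧ n3=2 ∧ n2=n-2))
    (hp3 : ¬(e23=6 ∧ e22=n-5 ∧ n3=2 ∧ n2=n-2))
    (hp9 : ¬(e12=1 ∧ e23=3 ∧ e33=3 ∧ e22=n-6 ∧ n1=1 ∧ n3=3 ∧ n2=n-4)) :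
    (12:ℝ)+36*Real.sqrt 5-48*Real.sqrt 2 <
      (e12:ℝ)*(12+6*Real.sqrt 2) + (e13:ℝ)*24 + (e14:ℝ)*(36-3*Real.sqrt 2)
      + (e11:ℝ)*(24*Real.sqrt 2) + (e23:ℝ)*(12*Real.sqrt 5-18*Real.sqrt 2)
      + (e24:ℝ)*(12*Real.sqrt 10-21*Real.sqrt 2)
      + (e34:ℝ)*(12*Real.sqrt 13-27*Real.sqrt 2) + (e44:ℝ)*(6*Real.sqrt 2) := by
  have hA : n3 ≤ 1 → e33 = 0 := by intro h; interval_cases n3 <;> omega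
  have hB : n3 = 2 → e33 ≤ 1 := by intro h; rw [h] at h7; omega
  have hC : n3 = 3 → e33 ≤ 3 := by intro h; rw [h] at h7; omega
  have hD : n4 ≤ 1 → e44 = 0 := by intro h; interval_cases n4 <;> omega
  have hd : 2*e23+3*e24+4*e33+5*e34+6*e44 = 12+12*e11+6*e12+4*e13+3*e14 := by omega
  have hp2' : ¬(e11=0 ∧ e12=0 ∧ e13=0 ∧ e14=0 ∧ e23=4 ∧ e24=0 ∧ e33=1 ∧ e34=0 ∧ e44=0) :=
    fun h => hp2 (by omega)
  have hp3' : ¬(e11=0 ∧ e12=0 ∧ e13=0 ∧ e14=0 ∧ e23=6 ∧ e24=0 ∧ e33=0 ∧ e34=0 ∧ e44=0) :=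
    fun h => hp3 (by omega)
  have hp9' : ¬(e11=0 ∧ e12=1 ∧ e13=0 ∧ e14=0 ∧ e23=3 ∧ e24=0 ∧ e33=3 ∧ e34=0 ∧ e44=0) :=
    fun h => hp9 (by omega)
  have h5' : 3*n3 = e13+e23+e34+2*e33 := h5
  have h6' : 4*n4 = e14+e24+e34+2*e44 := h6
  clear h1 h2 h3 h4 h5 h6 h7 h8 hn hp2 hp3 hp9
  clear n n1 n2
  by_contra hcon
  push_neg at hcon
  have b2g := sqrt2_gt; have b2l := sqrt2_lt; have b5g := sqrt5_gt; have b5l := sqrt5_lt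
  have b10g := sqrt10_gt; have b10l := sqrt10_lt; have b13g := sqrt13_gt; have b13l := sqrt13_lt
  have nn12 : (0:ℝ) ≤ (e12:ℝ)*(12+6*Real.sqrt 2) := mul_nonneg (Nat.cast_nonneg _) (by linarith)
  have nn13 : (0:ℝ) ≤ (e13:ℝ)*24 := mul_nonneg (Nat.cast_nonneg _) (by norm_num)
  have nn14 : (0:ℝ) ≤ (e14:ℝ)*(36-3*Real.sqrt 2) := mul_nonneg (Nat.cast_nonneg _) (by linarith)
  have nn11 : (0:ℝ) ≤ (e11:ℝ)*(24*Real.sqrt 2) := mul_nonneg (Nat.cast_nonneg _) (by linarith)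
  have nn23 : (0:ℝ) ≤ (e23:ℝ)*(12*Real.sqrt 5-18*Real.sqrt 2) := mul_nonneg (Nat.cast_nonneg _) (by linarith)
  have nn24 : (0:ℝ) ≤ (e24:ℝ)*(12*Real.sqrt 10-21*Real.sqrt 2) := mul_nonneg (Nat.cast_nonneg _) (by linarith)
  have nn34 : (0:ℝ) ≤ (e34:ℝ)*(12*Real.sqrt 13-27*Real.sqrt 2) := mul_nonneg (Nat.cast_nonneg _) (by linarith)
  have nn44 : (0:ℝ) ≤ (e44:ℝ)*(6*Real.sqrt 2) := mul_nonneg (Nat.cast_nonneg _) (by linarith)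
  have he11 : e11 = 0 := by
    by_contra h
    have h1' : (1:ℝ) ≤ (e11:ℝ) := by exact_mod_cast Nat.one_le_iff_ne_zero.mpr h
    have := mul_le_mul_of_nonneg_right h1' (le_of_lt (by linarith : (0:ℝ) < 24*Real.sqrt 2))
    linarith
  have he14 : e14 = 0 := by
    by_contra h
    have h1' : (1:ℝ) ≤ (e14:ℝ) := by exact_mod_cast Nat.one_le_iff_ne_zero.mpr h
    have := mul_le_mul_of_nonneg_right h1' (le_of_lt (by linarith : (0:ℝ) < 36-3*Real.sqrt 2))
    linarith
  have he12 : e12 ≤ 1 := by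
    by_contra h
    have h1' : (2:ℝ) ≤ (e12:ℝ) := by exact_mod_cast Nat.lt_of_not_le h
    have := mul_le_mul_of_nonneg_right h1' (le_of_lt (by linarith : (0:ℝ) < 12+6*Real.sqrt 2))
    linarith
  have he13 : e13 ≤ 1 := by
    by_contra h
    have h1' : (2:ℝ) ≤ (e13:ℝ) := by exact_mod_cast Nat.lt_of_not_le h
    have := mul_le_mul_of_nonneg_right h1' (le_of_lt (by norm_num : (0:ℝ) < 24))
    linarith
  have he24 : e24 ≤ 2 := by
    by_contra h
    have h1' : (3:ℝ) ≤ (e24:ℝ) := by exact_mod_cast Nat.lt_of_not_le h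
    have := mul_le_mul_of_nonneg_right h1' (le_of_lt (by linarith : (0:ℝ) < 12*Real.sqrt 10-21*Real.sqrt 2))
    linarith
  have he34 : e34 ≤ 4 := by
    by_contra h
    have h1' : (5:ℝ) ≤ (e34:ℝ) := by exact_mod_cast Nat.lt_of_not_le h
    have := mul_le_mul_of_nonneg_right h1' (le_of_lt (by linarith : (0:ℝ) < 12*Real.sqrt 13-27*Real.sqrt 2))
    linarith
  have he44 : e44 ≤ 2 := by
    by_contra h
    have h1' : (3:ℝ) ≤ (e44:ℝ) := by exact_mod_cast Nat.lt_of_not_le h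
    have := mul_le_mul_of_nonneg_right h1' (le_of_lt (by linarith : (0:ℝ) < 6*Real.sqrt 2))
    linarith
  have he23 : e23 ≤ 11 := by omega
  clear nn12 nn13 nn14 nn11 nn23 nn24 nn34 nn44
  subst he11 he14
  interval_cases e12 <;> interval_cases e13 <;> interval_cases e24 <;>
    interval_cases e44 <;> interval_cases e34 <;> interval_cases e23 <;>
    first
      | omega
      | (push_cast at hcon; linarith)

noncomputable def EG : Finset (Sym2 V) := (Set.toFinite G.edgeSet).toFinset

lemma mem_EG {G : SimpleGraph V} {e : Sym2 V} : e ∈ EG G ↔ e ∈ G.edgeSet :=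
  Set.Finite.mem_toFinset _

noncomputable def lab : Sym2 V → ℕ × ℕ :=
  Sym2.lift ⟨fun u v => (min (gdeg G u) (gdeg G v), max (gdeg G u) (gdeg G v)),
    fun u v => by simp [min_comm, max_comm]⟩

lemma lab_mk (u v : V) :
    lab G s(u,v) = (min (gdeg G u) (gdeg G v), max (gdeg G u) (gdeg G v)) := rfl

noncomputable def MM (p : ℕ × ℕ) : ℕ := ((EG G).filter (fun e => lab G e = p)).card

def TT : Finset (ℕ × ℕ) := {(1,1),(1,2),(1,3),(1,4),(2,2),(2,3),(2,4),(3,3),(3,4),(4,4)}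

lemma lab_mem_TT (hdeg : ∀ v, 1 ≤ gdeg G v ∧ gdeg G v ≤ 4) (e : Sym2 V) :
    lab G e ∈ TT := by
  induction e using Sym2.ind with
  | _ u v =>
    rw [lab_mk]
    obtain ⟨h1, h2⟩ := hdeg u
    obtain ⟨h3, h4⟩ := hdeg v
    simp only [TT, Finset.mem_insert, Finset.mem_singleton, Prod.mk.injEq]
    omega

lemma sum_lab_real (hdeg : ∀ v, 1 ≤ gdeg G v ∧ gdeg G v ≤ 4) (f : ℕ × ℕ → ℝ) :
    ∑ e ∈ EG G, f (lab G e) = ∑ p ∈ TT, (MM G p : ℝ) * f p := by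
  rw [← Finset.sum_fiberwise_of_maps_to (fun e _ => lab_mem_TT G hdeg e) (fun e => f (lab G e))]
  refine Finset.sum_congr rfl fun p _ => ?_
  rw [show ∑ e ∈ (EG G).filter (fun e => lab G e = p), f (lab G e)
        = ∑ e ∈ (EG G).filter (fun e => lab G e = p), f p from
      Finset.sum_congr rfl fun e he => by rw [(Finset.mem_filter.mp he).2]]
  rw [Finset.sum_const, nsmul_eq_mul]
  rfl

lemma sum_lab_nat (hdeg : ∀ v, 1 ≤ gdeg G v ∧ gdeg G v ≤ 4) (f : ℕ × ℕ → ℕ) :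
    ∑ e ∈ EG G, f (lab G e) = ∑ p ∈ TT, MM G p * f p := by
  rw [← Finset.sum_fiberwise_of_maps_to (fun e _ => lab_mem_TT G hdeg e) (fun e => f (lab G e))]
  refine Finset.sum_congr rfl fun p _ => ?_
  rw [show ∑ e ∈ (EG G).filter (fun e => lab G e = p), f (lab G e)
        = ∑ e ∈ (EG G).filter (fun e => lab G e = p), f p from
      Finset.sum_congr rfl fun e he => by rw [(Finset.mem_filter.mp he).2]]
  rw [Finset.sum_const, smul_eq_mul]
  rfl

lemma numEdges_eq (hdeg : ∀ v, 1 ≤ gdeg G v ∧ gdeg G v ≤ 4) :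
    numEdges G = ∑ p ∈ TT, MM G p := by
  have h := sum_lab_nat G hdeg (fun _ => 1)
  simp only [mul_one] at h
  rw [numEdges, show (Set.toFinite G.edgeSet).toFinset = EG G from rfl,
    Finset.card_eq_sum_ones, h]

lemma mij_eq {i j : ℕ} (hij : i ≤ j) : mij G i j = MM G (i,j) := by
  classical
  rw [mij, MM]
  congr 1
  refine Finset.filter_congr fun e he => ?_
  induction e using Sym2.ind with
  | _ u v =>
    simp only [Sym2.lift_mk, lab_mk, Prod.mk.injEq, eq_iff_iff]
    constructor
    · rintro (⟨h1, h2⟩ | ⟨h1, h2⟩) <;> omega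
    · rintro ⟨h1, h2⟩
      rcases le_total (gdeg G u) (gdeg G v) with h | h
      · left; constructor <;> omega
      · right; constructor <;> omega

lemma SOred_eq (hdeg : ∀ v, 1 ≤ gdeg G v ∧ gdeg G v ≤ 4) :
    SOred G = ∑ p ∈ TT, (MM G p : ℝ) *
      Real.sqrt (((p.1:ℝ) - 1)^2 + ((p.2:ℝ) - 1)^2) := by
  rw [SOred, show (Set.toFinite G.edgeSet).toFinset = EG G from rfl,
    ← sum_lab_real G hdeg (fun p => Real.sqrt (((p.1:ℝ) - 1)^2 + ((p.2:ℝ) - 1)^2))]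
  refine Finset.sum_congr rfl fun e _ => ?_
  induction e using Sym2.ind with
  | _ u v =>
    rw [Sym2.lift_mk, lab_mk]
    rcases le_total (gdeg G u) (gdeg G v) with h | h
    · rw [min_eq_left h, max_eq_right h]
    · rw [min_eq_right h, max_eq_left h]
      dsimp only
      rw [add_comm]

def tfun (i : ℕ) (p : ℕ × ℕ) : ℕ :=
  (if p.1 = i then 1 else 0) + (if p.2 = i then 1 else 0)

open scoped Classical in
lemma gdeg_eq_card_incident (v : V) :
    gdeg G v = ((EG G).filter (fun e => v ∈ e)).card := by
  rw [gdeg]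
  refine Finset.card_bij (fun w _ => s(v,w)) ?_ ?_ ?_
  · intro w hw
    rw [Set.Finite.mem_toFinset] at hw
    refine Finset.mem_filter.mpr ⟨mem_EG.mpr ?_, ?_⟩
    · rwa [SimpleGraph.mem_edgeSet]
    · simp
  · intro w1 h1 w2 h2 h
    exact Sym2.congr_right.mp h
  · rintro e he
    obtain ⟨heE, hve⟩ := Finset.mem_filter.mp he
    rw [mem_EG] at heE
    induction e using Sym2.ind with
    | _ u w =>
      rw [SimpleGraph.mem_edgeSet] at heE
      rcases Sym2.mem_iff.mp hve with h | h
      · subst h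
        exact ⟨w, Set.Finite.mem_toFinset _ |>.mpr heE, rfl⟩
      · subst h
        exact ⟨u, Set.Finite.mem_toFinset _ |>.mpr heE.symm, Sym2.eq_swap⟩

open scoped Classical in
lemma card_endpoints (i : ℕ) {e : Sym2 V} (he : e ∈ EG G) :
    (Finset.univ.filter (fun v => gdeg G v = i ∧ v ∈ e)).card = tfun i (lab G e) := by
  induction e using Sym2.ind with
  | _ u w =>
    have hne : u ≠ w := by
      have := G.not_isDiag_of_mem_edgeSet (mem_EG.mp he)
      simpa [Sym2.mk_isDiag_iff] using this
    have hset : Finset.univ.filter (fun v => gdeg G v = i ∧ v ∈ s(u,w))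
        = ({u, w} : Finset V).filter (fun v => gdeg G v = i) := by
      ext x
      simp only [Finset.mem_filter, Finset.mem_univ, true_and, Sym2.mem_iff,
        Finset.mem_insert, Finset.mem_singleton]
      tauto
    rw [hset, lab_mk]
    simp only [tfun]
    have hcard : (({u, w} : Finset V).filter (fun v => gdeg G v = i)).card
        = (if gdeg G u = i then 1 else 0) + (if gdeg G w = i then 1 else 0) := by
      rw [Finset.filter_insert, Finset.filter_singleton]
      by_cases hu : gdeg G u = i <;> by_cases hw2 : gdeg G w = i <;>
        simp [hu, hw2, hne]
    rw [hcard]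
    rcases le_total (gdeg G u) (gdeg G w) with h | h
    · rw [min_eq_left h, max_eq_right h]
    · rw [min_eq_right h, max_eq_left h, add_comm]

open scoped Classical in
lemma incidence (hdeg : ∀ v, 1 ≤ gdeg G v ∧ gdeg G v ≤ 4) (i : ℕ) :
    i * nDeg G i = ∑ p ∈ TT, MM G p * tfun i p := by
  have step1 : i * nDeg G i = ∑ v ∈ Finset.univ.filter (fun v => gdeg G v = i), gdeg G v := by
    rw [nDeg, Finset.sum_congr rfl (fun v hv => (Finset.mem_filter.mp hv).2),
      Finset.sum_const, smul_eq_mul, mul_comm]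
  rw [step1,
    Finset.sum_congr rfl (fun v _ => by
      rw [gdeg_eq_card_incident G v, Finset.card_filter]),
    Finset.sum_comm, ← sum_lab_nat G hdeg (tfun i)]
  refine Finset.sum_congr rfl fun e he => ?_
  rw [← card_endpoints G i he, Finset.card_filter]
  rw [Finset.sum_filter]
  refine Finset.sum_congr rfl fun v _ => ?_
  split_ifs <;> tauto

lemma sum_nDeg (hdeg : ∀ v, 1 ≤ gdeg G v ∧ gdeg G v ≤ 4) :
    nDeg G 1 + nDeg G 2 + nDeg G 3 + nDeg G 4 = Fintype.card V := by
  classical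
  have h := Finset.card_eq_sum_card_fiberwise
    (f := fun v => gdeg G v) (s := Finset.univ) (t := ({1,2,3,4} : Finset ℕ))
    (fun v _ => by
      obtain ⟨h1, h2⟩ := hdeg v
      simp only [Finset.mem_coe, Finset.mem_insert, Finset.mem_singleton]
      omega)
  rw [Finset.card_univ] at h
  rw [h]
  simp only [nDeg]
  rw [show ({1,2,3,4} : Finset ℕ) = insert 1 (insert 2 (insert 3 {4})) from rfl]
  rw [Finset.sum_insert (by decide), Finset.sum_insert (by decide),
    Finset.sum_insert (by decide), Finset.sum_singleton]
  ring

open scoped Classical in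
lemma mii_bound (i : ℕ) : 2 * MM G (i,i) ≤ nDeg G i * (nDeg G i - 1) := by
  set S := Finset.univ.filter (fun v => gdeg G v = i) with hS
  set Eii := (EG G).filter (fun e => lab G e = (i,i)) with hEii
  have hboth : ∀ e ∈ Eii, (S.filter (fun v => v ∈ e)).card = 2 := by
    intro e he
    obtain ⟨heE, hlab⟩ := Finset.mem_filter.mp he
    have := card_endpoints G i heE
    rw [hlab] at this
    have h2 : tfun i (i,i) = 2 := by simp [tfun]
    rw [h2] at this
    rw [← this, hS, Finset.filter_filter]
  have hdouble : ∑ e ∈ Eii, (S.filter (fun v => v ∈ e)).card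
      = ∑ v ∈ S, (Eii.filter (fun e => v ∈ e)).card := by
    simp only [Finset.card_filter]
    exact Finset.sum_comm
  have hper : ∀ v ∈ S, (Eii.filter (fun e => v ∈ e)).card ≤ S.card - 1 := by
    intro v hv
    have hsub : Eii.filter (fun e => v ∈ e) ⊆ (S.erase v).image (fun w => s(v,w)) := by
      intro e he2
      obtain ⟨heEii, hve⟩ := Finset.mem_filter.mp he2
      obtain ⟨heE, hlab⟩ := Finset.mem_filter.mp heEii
      induction e using Sym2.ind with
      | _ u w =>
        have hne : u ≠ w := by
          have := G.not_isDiag_of_mem_edgeSet (mem_EG.mp heE)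
          simpa [Sym2.mk_isDiag_iff] using this
        rw [lab_mk, Prod.mk.injEq] at hlab
        have hdu : gdeg G u = i := by omega
        have hdw : gdeg G w = i := by omega
        rcases Sym2.mem_iff.mp hve with h | h
        · subst h
          exact Finset.mem_image.mpr ⟨w, Finset.mem_erase.mpr
            ⟨fun hh => hne hh.symm, Finset.mem_filter.mpr ⟨Finset.mem_univ _, hdw⟩⟩, rfl⟩
        · subst h
          exact Finset.mem_image.mpr ⟨u, Finset.mem_erase.mpr
            ⟨hne, Finset.mem_filter.mpr ⟨Finset.mem_univ _, hdu⟩⟩, Sym2.eq_swap⟩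
    calc (Eii.filter (fun e => v ∈ e)).card
        ≤ ((S.erase v).image (fun w => s(v,w))).card := Finset.card_le_card hsub
      _ ≤ (S.erase v).card := Finset.card_image_le
      _ = S.card - 1 := by rw [Finset.card_erase_of_mem hv]
  have h2m : 2 * MM G (i,i) = ∑ e ∈ Eii, (S.filter (fun v => v ∈ e)).card := by
    rw [Finset.sum_congr rfl hboth, Finset.sum_const, smul_eq_mul, MM, mul_comm]
  have hnd : nDeg G i = S.card := rfl
  calc 2 * MM G (i,i) = ∑ e ∈ Eii, (S.filter (fun v => v ∈ e)).card := h2m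
    _ = ∑ v ∈ S, (Eii.filter (fun e => v ∈ e)).card := hdouble
    _ ≤ ∑ v ∈ S, (S.card - 1) := Finset.sum_le_sum hper
    _ = S.card * (S.card - 1) := by rw [Finset.sum_const, smul_eq_mul]
    _ = nDeg G i * (nDeg G i - 1) := by rw [hnd]

lemma one_le_gdeg (hc : G.Connected) (hV : 1 < Fintype.card V) (v : V) :
    1 ≤ gdeg G v := by
  obtain ⟨w, hw⟩ := Fintype.exists_ne_of_one_lt_card hV v
  obtain ⟨p⟩ := hc.preconnected v w
  cases p with
  | nil => exact absurd rfl hw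
  | cons h q =>
    rw [gdeg, Nat.one_le_iff_ne_zero, ← Nat.pos_iff_ne_zero, Finset.card_pos]
    exact ⟨_, (Set.Finite.mem_toFinset _).mpr h⟩

lemma TT_sum {M : Type*} [AddCommMonoid M] (f : ℕ × ℕ → M) :
    ∑ p ∈ TT, f p = f (1,1) + f (1,2) + f (1,3) + f (1,4) + f (2,2) + f (2,3)
      + f (2,4) + f (3,3) + f (3,4) + f (4,4) := by
  rw [TT]
  rw [Finset.sum_insert (by decide), Finset.sum_insert (by decide),
    Finset.sum_insert (by decide), Finset.sum_insert (by decide),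
    Finset.sum_insert (by decide), Finset.sum_insert (by decide),
    Finset.sum_insert (by decide), Finset.sum_insert (by decide),
    Finset.sum_insert (by decide), Finset.sum_singleton]
  abel

lemma sqrt_four : Real.sqrt 4 = 2 := by
  rw [show (4:ℝ) = 2^2 by norm_num, Real.sqrt_sq (by norm_num)]

lemma sqrt_nine : Real.sqrt 9 = 3 := by
  rw [show (9:ℝ) = 3^2 by norm_num, Real.sqrt_sq (by norm_num)]

lemma sqrt_eight : Real.sqrt 8 = 2 * Real.sqrt 2 := by
  rw [show (8:ℝ) = 2^2 * 2 by norm_num, Real.sqrt_mul (by positivity),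
    Real.sqrt_sq (by norm_num)]

lemma sqrt_eighteen : Real.sqrt 18 = 3 * Real.sqrt 2 := by
  rw [show (18:ℝ) = 3^2 * 2 by norm_num, Real.sqrt_mul (by positivity),
    Real.sqrt_sq (by norm_num)]

lemma SOred_expand (hdeg : ∀ v, 1 ≤ gdeg G v ∧ gdeg G v ≤ 4) :
    SOred G = (MM G (1,2) : ℝ) + (MM G (1,3) : ℝ)*2 + (MM G (1,4) : ℝ)*3
      + (MM G (2,2) : ℝ)*Real.sqrt 2 + (MM G (2,3) : ℝ)*Real.sqrt 5
      + (MM G (2,4) : ℝ)*Real.sqrt 10 + (MM G (3,3) : ℝ)*(2*Real.sqrt 2)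
      + (MM G (3,4) : ℝ)*Real.sqrt 13 + (MM G (4,4) : ℝ)*(3*Real.sqrt 2) := by
  rw [SOred_eq G hdeg, TT_sum]
  norm_num
  rw [sqrt_eight, sqrt_eighteen]

lemma equations (hdeg : ∀ v, 1 ≤ gdeg G v ∧ gdeg G v ≤ 4) :
    MM G (1,1)+MM G (1,2)+MM G (1,3)+MM G (1,4)+MM G (2,2)+MM G (2,3)+MM G (2,4)
      +MM G (3,3)+MM G (3,4)+MM G (4,4) = numEdges G
    ∧ nDeg G 1 + nDeg G 2 + nDeg G 3 + nDeg G 4 = Fintype.card V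
    ∧ nDeg G 1 = MM G (1,2)+MM G (1,3)+MM G (1,4)+2*MM G (1,1)
    ∧ 2*nDeg G 2 = MM G (1,2)+MM G (2,3)+MM G (2,4)+2*MM G (2,2)
    ∧ 3*nDeg G 3 = MM G (1,3)+MM G (2,3)+MM G (3,4)+2*MM G (3,3)
    ∧ 4*nDeg G 4 = MM G (1,4)+MM G (2,4)+MM G (3,4)+2*MM G (4,4) := by
  refine ⟨?_, sum_nDeg G hdeg, ?_, ?_, ?_, ?_⟩
  · rw [numEdges_eq G hdeg, TT_sum]
  · have h := incidence G hdeg 1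
    rw [TT_sum] at h
    rw [show tfun 1 (1,1) = 2 from by decide, show tfun 1 (1,2) = 1 from by decide,
      show tfun 1 (1,3) = 1 from by decide, show tfun 1 (1,4) = 1 from by decide,
      show tfun 1 (2,2) = 0 from by decide, show tfun 1 (2,3) = 0 from by decide,
      show tfun 1 (2,4) = 0 from by decide, show tfun 1 (3,3) = 0 from by decide,
      show tfun 1 (3,4) = 0 from by decide, show tfun 1 (4,4) = 0 from by decide] at h
    omega
  · have h := incidence G hdeg 2
    rw [TT_sum] at h
    rw [show tfun 2 (1,1) = 0 from by decide, show tfun 2 (1,2) = 1 from by decide,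
      show tfun 2 (1,3) = 0 from by decide, show tfun 2 (1,4) = 0 from by decide,
      show tfun 2 (2,2) = 2 from by decide, show tfun 2 (2,3) = 1 from by decide,
      show tfun 2 (2,4) = 1 from by decide, show tfun 2 (3,3) = 0 from by decide,
      show tfun 2 (3,4) = 0 from by decide, show tfun 2 (4,4) = 0 from by decide] at h
    omega
  · have h := incidence G hdeg 3
    rw [TT_sum] at h
    rw [show tfun 3 (1,1) = 0 from by decide, show tfun 3 (1,2) = 0 from by decide,
      show tfun 3 (1,3) = 1 from by decide, show tfun 3 (1,4) = 0 from by decide,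
      show tfun 3 (2,2) = 0 from by decide, show tfun 3 (2,3) = 1 from by decide,
      show tfun 3 (2,4) = 0 from by decide, show tfun 3 (3,3) = 2 from by decide,
      show tfun 3 (3,4) = 1 from by decide, show tfun 3 (4,4) = 0 from by decide] at h
    omega
  · have h := incidence G hdeg 4
    rw [TT_sum] at h
    rw [show tfun 4 (1,1) = 0 from by decide, show tfun 4 (1,2) = 0 from by decide,
      show tfun 4 (1,3) = 0 from by decide, show tfun 4 (1,4) = 1 from by decide,
      show tfun 4 (2,2) = 0 from by decide, show tfun 4 (2,3) = 0 from by decide,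
      show tfun 4 (2,4) = 1 from by decide, show tfun 4 (3,3) = 0 from by decide,
      show tfun 4 (3,4) = 1 from by decide, show tfun 4 (4,4) = 2 from by decide] at h
    omega

lemma hdeg_of_bicyclic (h : IsChemicalBicyclic G) (hn : 6 ≤ Fintype.card V) :
    ∀ v, 1 ≤ gdeg G v ∧ gdeg G v ≤ 4 :=
  fun v => ⟨one_le_gdeg G h.1 (by omega) v, h.2.2 v⟩

lemma beta2_SOred (h : InBeta2 G) (hn : 6 ≤ Fintype.card V) :
    SOred G = ((Fintype.card V : ℝ) - 4) * Real.sqrt 2 + (4*Real.sqrt 5 + 2*Real.sqrt 2) := by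
  obtain ⟨hbc, hn3, hn2, hm23, hm33, hm22⟩ := h
  have hdeg := hdeg_of_bicyclic G hbc hn
  obtain ⟨q1, q2, q3, q4, q5, q6⟩ := equations G hdeg
  rw [mij_eq G (by norm_num : (2:ℕ) ≤ 3)] at hm23
  rw [mij_eq G (by norm_num : (3:ℕ) ≤ 3)] at hm33
  rw [mij_eq G (by norm_num : (2:ℕ) ≤ 2)] at hm22
  rw [hbc.2.1] at q1
  have e11 : MM G (1,1) = 0 := by omega
  have e12 : MM G (1,2) = 0 := by omega
  have e13 : MM G (1,3) = 0 := by omega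
  have e14 : MM G (1,4) = 0 := by omega
  have e24 : MM G (2,4) = 0 := by omega
  have e34 : MM G (3,4) = 0 := by omega
  have e44 : MM G (4,4) = 0 := by omega
  rw [SOred_expand G hdeg, e12, e13, e14, e24, e34, e44, hm23, hm33, hm22]
  have h4n : (4:ℕ) ≤ Fintype.card V := by omega
  push_cast [h4n]
  ring

lemma beta3_SOred (h : InBeta3 G) (hn : 6 ≤ Fintype.card V) :
    SOred G = ((Fintype.card V : ℝ) - 5) * Real.sqrt 2 + 6*Real.sqrt 5 := by
  obtain ⟨hbc, hn3, hn2, hm23, hm22⟩ := h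
  have hdeg := hdeg_of_bicyclic G hbc hn
  obtain ⟨q1, q2, q3, q4, q5, q6⟩ := equations G hdeg
  rw [mij_eq G (by norm_num : (2:ℕ) ≤ 3)] at hm23
  rw [mij_eq G (by norm_num : (2:ℕ) ≤ 2)] at hm22
  rw [hbc.2.1] at q1
  have e11 : MM G (1,1) = 0 := by omega
  have e12 : MM G (1,2) = 0 := by omega
  have e13 : MM G (1,3) = 0 := by omega
  have e14 : MM G (1,4) = 0 := by omega
  have e24 : MM G (2,4) = 0 := by omega
  have e34 : MM G (3,4) = 0 := by omega
  have e44 : MM G (4,4) = 0 := by omega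
  have e33 : MM G (3,3) = 0 := by omega
  rw [SOred_expand G hdeg, e12, e13, e14, e24, e34, e44, e33, hm23, hm22]
  have h5n : (5:ℕ) ≤ Fintype.card V := by omega
  push_cast [h5n]
  ring

lemma beta9_SOred (h : InBeta9 G) (hn : 6 ≤ Fintype.card V) :
    SOred G = ((Fintype.card V : ℝ) - 6) * Real.sqrt 2 + (1 + 3*Real.sqrt 5 + 6*Real.sqrt 2) := by
  obtain ⟨hbc, hn3, hn1, hn2, hm12, hm23, hm33, hm22⟩ := h
  have hdeg := hdeg_of_bicyclic G hbc hn
  obtain ⟨q1, q2, q3, q4, q5, q6⟩ := equations G hdeg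
  rw [mij_eq G (by norm_num : (1:ℕ) ≤ 2)] at hm12
  rw [mij_eq G (by norm_num : (2:ℕ) ≤ 3)] at hm23
  rw [mij_eq G (by norm_num : (3:ℕ) ≤ 3)] at hm33
  rw [mij_eq G (by norm_num : (2:ℕ) ≤ 2)] at hm22
  rw [hbc.2.1] at q1
  have e11 : MM G (1,1) = 0 := by omega
  have e13 : MM G (1,3) = 0 := by omega
  have e14 : MM G (1,4) = 0 := by omega
  have e24 : MM G (2,4) = 0 := by omega
  have e34 : MM G (3,4) = 0 := by omega
  have e44 : MM G (4,4) = 0 := by omega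
  rw [SOred_expand G hdeg, e13, e14, e24, e34, e44, hm12, hm23, hm33, hm22]
  have h6n : (6:ℕ) ≤ Fintype.card V := by omega
  push_cast [h6n]
  ring


end SomborAux

/-- Ordering of chemical bicyclic graphs on n ≥ 6 vertices by the index `SOred`. -/
theorem thm310 (n : ℕ) (hn : 6 ≤ n)
    {V₁ : Type*} [Fintype V₁] (G₁ : SimpleGraph V₁) (hc₁ : Fintype.card V₁ = n)
    {V₂ : Type*} [Fintype V₂] (G₂ : SimpleGraph V₂) (hc₂ : Fintype.card V₂ = n)
    {V₃ : Type*} [Fintype V₃] (G₃ : SimpleGraph V₃) (hc₃ : Fintype.card V₃ = n)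
    {V : Type*} [Fintype V] (G : SimpleGraph V) (hc : Fintype.card V = n)
    (h₁ : InBeta2 G₁) (h₂ : InBeta3 G₂) (h₃ : InBeta9 G₃)
    (hG : IsChemicalBicyclic G)
    (hGnot : ¬ InBeta2 G ∧ ¬ InBeta3 G ∧ ¬ InBeta9 G) :
    SOred G₁ < SOred G₂ ∧ SOred G₂ < SOred G₃ ∧ SOred G₃ < SOred G := by
  have hv1 := SomborAux.beta2_SOred G₁ h₁ (by rw [hc₁]; exact hn)
  rw [hc₁] at hv1
  have hv2 := SomborAux.beta3_SOred G₂ h₂ (by rw [hc₂]; exact hn)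
  rw [hc₂] at hv2
  have hv3 := SomborAux.beta9_SOred G₃ h₃ (by rw [hc₃]; exact hn)
  rw [hc₃] at hv3
  have b2g := SomborAux.sqrt2_gt
  have b2l := SomborAux.sqrt2_lt
  have b5g := SomborAux.sqrt5_gt
  have b5l := SomborAux.sqrt5_lt
  have hn6 : (6:ℝ) ≤ (n:ℝ) := by exact_mod_cast hn
  refine ⟨by rw [hv1, hv2]; linarith, by rw [hv2, hv3]; linarith, ?_⟩
  rw [hv3]
  have hdeg := SomborAux.hdeg_of_bicyclic G hG (by rw [hc]; exact hn)
  obtain ⟨q1, q2, q3, q4, q5, q6⟩ := SomborAux.equations G hdeg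
  rw [hG.2.1, hc] at q1
  rw [hc] at q2
  have h7 := SomborAux.mii_bound G 3
  have h8 := SomborAux.mii_bound G 4
  have hp2 : ¬(SomborAux.MM G (2,3) = 4 ∧ SomborAux.MM G (3,3) = 1 ∧
      SomborAux.MM G (2,2) = n-4 ∧ nDeg G 3 = 2 ∧ nDeg G 2 = n-2) := by
    rintro ⟨a, b, c, d, e⟩
    refine hGnot.1 ⟨hG, d, by rw [hc]; exact e, ?_, ?_, ?_⟩
    · rw [SomborAux.mij_eq G (by norm_num : (2:ℕ) ≤ 3)]; exact a
    · rw [SomborAux.mij_eq G (by norm_num : (3:ℕ) ≤ 3)]; exact b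
    · rw [SomborAux.mij_eq G (by norm_num : (2:ℕ) ≤ 2), hc]; exact c
  have hp3 : ¬(SomborAux.MM G (2,3) = 6 ∧ SomborAux.MM G (2,2) = n-5 ∧
      nDeg G 3 = 2 ∧ nDeg G 2 = n-2) := by
    rintro ⟨a, b, c, d⟩
    refine hGnot.2.1 ⟨hG, c, by rw [hc]; exact d, ?_, ?_⟩
    · rw [SomborAux.mij_eq G (by norm_num : (2:ℕ) ≤ 3)]; exact a
    · rw [SomborAux.mij_eq G (by norm_num : (2:ℕ) ≤ 2), hc]; exact b
  have hp9 : ¬(SomborAux.MM G (1,2) = 1 ∧ SomborAux.MM G (2,3) = 3 ∧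
      SomborAux.MM G (3,3) = 3 ∧ SomborAux.MM G (2,2) = n-6 ∧
      nDeg G 1 = 1 ∧ nDeg G 3 = 3 ∧ nDeg G 2 = n-4) := by
    rintro ⟨a, b, c, d, e, f, g⟩
    refine hGnot.2.2 ⟨hG, f, e, by rw [hc]; exact g, ?_, ?_, ?_, ?_⟩
    · rw [SomborAux.mij_eq G (by norm_num : (1:ℕ) ≤ 2)]; exact a
    · rw [SomborAux.mij_eq G (by norm_num : (2:ℕ) ≤ 3)]; exact b
    · rw [SomborAux.mij_eq G (by norm_num : (3:ℕ) ≤ 3)]; exact c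
    · rw [SomborAux.mij_eq G (by norm_num : (2:ℕ) ≤ 2), hc]; exact d
  have hkey := SomborAux.keyS n (SomborAux.MM G (1,1)) (SomborAux.MM G (1,2))
    (SomborAux.MM G (1,3)) (SomborAux.MM G (1,4)) (SomborAux.MM G (2,2))
    (SomborAux.MM G (2,3)) (SomborAux.MM G (2,4)) (SomborAux.MM G (3,3))
    (SomborAux.MM G (3,4)) (SomborAux.MM G (4,4))
    (nDeg G 1) (nDeg G 2) (nDeg G 3) (nDeg G 4)
    q1 q2 q3 q4 q5 q6 h7 h8 hn hp2 hp3 hp9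
  have hw : 12*n = 24*SomborAux.MM G (1,1)+18*SomborAux.MM G (1,2)+16*SomborAux.MM G (1,3)+15*SomborAux.MM G (1,4)+12*SomborAux.MM G (2,2)+10*SomborAux.MM G (2,3)+9*SomborAux.MM G (2,4)+8*SomborAux.MM G (3,3)+7*SomborAux.MM G (3,4)+6*SomborAux.MM G (4,4) := by omega
  have hwR : (12:ℝ)*(n:ℝ) = 24*(SomborAux.MM G (1,1) : ℝ)+18*(SomborAux.MM G (1,2) : ℝ)+16*(SomborAux.MM G (1,3) : ℝ)+15*(SomborAux.MM G (1,4) : ℝ)+12*(SomborAux.MM G (2,2) : ℝ)+10*(SomborAux.MM G (2,3) : ℝ)+9*(SomborAux.MM G (2,4) : ℝ)+8*(SomborAux.MM G (3,3) : ℝ)+7*(SomborAux.MM G (3,4) : ℝ)+6*(SomborAux.MM G (4,4) : ℝ) := by exact_mod_cast hw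
  have hwS : (12:ℝ)*(n:ℝ)*Real.sqrt 2 = (24*(SomborAux.MM G (1,1) : ℝ)+18*(SomborAux.MM G (1,2) : ℝ)+16*(SomborAux.MM G (1,3) : ℝ)+15*(SomborAux.MM G (1,4) : ℝ)+12*(SomborAux.MM G (2,2) : ℝ)+10*(SomborAux.MM G (2,3) : ℝ)+9*(SomborAux.MM G (2,4) : ℝ)+8*(SomborAux.MM G (3,3) : ℝ)+7*(SomborAux.MM G (3,4) : ℝ)+6*(SomborAux.MM G (4,4) : ℝ))*Real.sqrt 2 := by rw [hwR]
  have hd : 2*SomborAux.MM G (2,3)+3*SomborAux.MM G (2,4)+4*SomborAux.MM G (3,3)+5*SomborAux.MM G (3,4)+6*SomborAux.MM G (4,4) = 12+12*SomborAux.MM G (1,1)+6*SomborAux.MM G (1,2)+4*SomborAux.MM G (1,3)+3*SomborAux.MM G (1,4) := by omega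
  have hdR : (2*(SomborAux.MM G (2,3) : ℝ)+3*(SomborAux.MM G (2,4) : ℝ)+4*(SomborAux.MM G (3,3) : ℝ)+5*(SomborAux.MM G (3,4) : ℝ)+6*(SomborAux.MM G (4,4) : ℝ) : ℝ) = 12+12*(SomborAux.MM G (1,1) : ℝ)+6*(SomborAux.MM G (1,2) : ℝ)+4*(SomborAux.MM G (1,3) : ℝ)+3*(SomborAux.MM G (1,4) : ℝ) := by exact_mod_cast hd
  have hdS : (2*(SomborAux.MM G (2,3) : ℝ)+3*(SomborAux.MM G (2,4) : ℝ)+4*(SomborAux.MM G (3,3) : ℝ)+5*(SomborAux.MM G (3,4) : ℝ)+6*(SomborAux.MM G (4,4) : ℝ) : ℝ)*Real.sqrt 2 = (12+12*(SomborAux.MM G (1,1) : ℝ)+6*(SomborAux.MM G (1,2) : ℝ)+4*(SomborAux.MM G (1,3) : ℝ)+3*(SomborAux.MM G (1,4) : ℝ))*Real.sqrt 2 := by rw [hdR]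
  rw [SomborAux.SOred_expand G hdeg]
  linarith [hkey, hwS, hdS]
end
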